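/- arXiv:1604.00995 — 4 statements merged into one kernel-verified Lean document; each statement's English description precedes it below -/
import Mathlib

section
/- Let Φ be a norm on ℝ^{n+1} and Ω̂ ⊆ ℝ^n an open set. If u_k ∈ M_{Φ^o}(Ω̂) for every k, u ∈ L¹_loc(Ω̂), and u_k → u in L¹_loc(Ω̂) as k → ∞, then u ∈ BV_loc(Ω̂) and u ∈ M_{Φ^o}(Ω̂). -/
open MeasureTheory Set Filter

noncomputable section

/-- `ℝ^n` with the Euclidean norm. -/
abbrev Rn (n : ℕ) := EuclideanSpace ℝ (Fin n)

/-- `ℝ^{n+1} = ℝ^n × ℝ`. -/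
abbrev Rn1 (n : ℕ) := Rn n × ℝ

/-- Euclidean dot product on `ℝ^n`. -/
def dotn {n : ℕ} (x y : Rn n) : ℝ := ∑ i, x i * y i

/-- Euclidean dot product on `ℝ^{n+1} = ℝ^n × ℝ`. -/
def dotp {n : ℕ} (x y : Rn1 n) : ℝ := dotn x.1 y.1 + x.2 * y.2

/-- Euclidean norm on `ℝ^{n+1} = ℝ^n × ℝ`. -/
def enorm1 {n : ℕ} (x : Rn1 n) : ℝ := Real.sqrt (dotp x x)

/-- `Ψ` is a norm on `ℝ^n`: convex, absolutely one-homogeneous and bounded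
below by a positive multiple of the Euclidean norm. -/
def IsNormN {n : ℕ} (Ψ : Rn n → ℝ) : Prop :=
  ConvexOn ℝ univ Ψ ∧ (∀ (c : ℝ) (ξ : Rn n), Ψ (c • ξ) = |c| * Ψ ξ) ∧
    ∃ c > (0:ℝ), ∀ ξ, c * ‖ξ‖ ≤ Ψ ξ

/-- `Φ` is a norm on `ℝ^{n+1}`. -/
def IsNorm1 {n : ℕ} (Φ : Rn1 n → ℝ) : Prop :=
  ConvexOn ℝ univ Φ ∧ (∀ (c : ℝ) (ξ : Rn1 n), Φ (c • ξ) = |c| * Φ ξ) ∧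
    ∃ c > (0:ℝ), ∀ ξ, c * enorm1 ξ ≤ Φ ξ

/-- Dual norm on `ℝ^n`: `Ψ^o(ξ*) = sup {ξ*·ξ : Ψ(ξ) ≤ 1}`. -/
def dualN {n : ℕ} (Ψ : Rn n → ℝ) (xs : Rn n) : ℝ :=
  sSup ((fun ξ => dotn xs ξ) '' {ξ | Ψ ξ ≤ 1})

/-- Dual norm on `ℝ^{n+1}`. -/
def dual1 {n : ℕ} (Φ : Rn1 n → ℝ) (xs : Rn1 n) : ℝ :=
  sSup ((fun ξ => dotp xs ξ) '' {ξ | Φ ξ ≤ 1})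

/-- `Φ` is cylindrical over `φ`: `Φ(ξ̂,ξ_{n+1}) = max (φ(ξ̂), |ξ_{n+1}|)`. -/
def Cylindrical {n : ℕ} (Φ : Rn1 n → ℝ) (φ : Rn n → ℝ) : Prop :=
  ∀ ξ : Rn1 n, Φ ξ = max (φ ξ.1) |ξ.2|

/-- `A` is an open set compactly contained in `O`. -/
def CpCtd {E : Type*} [TopologicalSpace E] (A O : Set E) : Prop :=
  IsOpen A ∧ IsCompact (closure A) ∧ closure A ⊆ O

/-- Divergence of a vector field on `ℝ^n`. -/
def divN {n : ℕ} (η : Rn n → Rn n) (x : Rn n) : ℝ :=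
  ∑ i, fderiv ℝ η x (EuclideanSpace.single i (1:ℝ)) i

/-- Divergence of a vector field on `ℝ^{n+1} = ℝ^n × ℝ`. -/
def div1 {n : ℕ} (η : Rn1 n → Rn1 n) (z : Rn1 n) : ℝ :=
  (∑ i, (fderiv ℝ η z (EuclideanSpace.single i (1:ℝ), (0:ℝ))).1 i) +
    (fderiv ℝ η z ((0 : Rn n), (1:ℝ))).2

/-- Admissible test vector fields on `ℝ^n`: `C^1`, compactly supported in `A`,
with values in the unit ball of `Ψ`. -/
def TestN {n : ℕ} (A : Set (Rn n)) (Ψ : Rn n → ℝ) (η : Rn n → Rn n) : Prop :=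
  ContDiff ℝ 1 η ∧ HasCompactSupport η ∧ tsupport η ⊆ A ∧ ∀ x, Ψ (η x) ≤ 1

/-- Admissible test vector fields on `ℝ^{n+1}`. -/
def Test1 {n : ℕ} (A : Set (Rn1 n)) (Φ : Rn1 n → ℝ) (η : Rn1 n → Rn1 n) : Prop :=
  ContDiff ℝ 1 η ∧ HasCompactSupport η ∧ tsupport η ⊆ A ∧ ∀ z, Φ (η z) ≤ 1

/-- The set of numbers whose supremum is the anisotropic perimeter `P_Ψ(E,A)` in `ℝ^n`. -/
def perSetN {n : ℕ} (Ψ : Rn n → ℝ) (E A : Set (Rn n)) : Set ℝ :=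
  {r | ∃ η, TestN A Ψ η ∧ r = -∫ x in E, divN η x}

/-- Anisotropic perimeter `P_Ψ(E,A)` in `ℝ^n`. -/
def PerN {n : ℕ} (Ψ : Rn n → ℝ) (E A : Set (Rn n)) : ℝ := sSup (perSetN Ψ E A)

/-- `E` has locally finite perimeter in `O ⊆ ℝ^n`. -/
def BVlocSetN {n : ℕ} (O E : Set (Rn n)) : Prop :=
  ∀ A, CpCtd A O → BddAbove (perSetN (fun x => ‖x‖) E A)

/-- `E` is a minimizer of `P_Ψ` (by compact perturbations) in `O ⊆ ℝ^n`. -/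
def MinPerN {n : ℕ} (Ψ : Rn n → ℝ) (O E : Set (Rn n)) : Prop :=
  BVlocSetN O E ∧ ∀ A, CpCtd A O → ∀ F, BVlocSetN O F →
    IsCompact (closure (symmDiff E F)) → closure (symmDiff E F) ⊆ A →
      PerN Ψ E A ≤ PerN Ψ F A

/-- The set of numbers whose supremum is the anisotropic perimeter `P_Φ(E,A)` in `ℝ^{n+1}`. -/
def perSet1 {n : ℕ} (Φ : Rn1 n → ℝ) (E A : Set (Rn1 n)) : Set ℝ :=
  {r | ∃ η, Test1 A Φ η ∧ r = -∫ z in E, div1 η z}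

/-- Anisotropic perimeter `P_Φ(E,A)` in `ℝ^{n+1}`. -/
def Per1 {n : ℕ} (Φ : Rn1 n → ℝ) (E A : Set (Rn1 n)) : ℝ := sSup (perSet1 Φ E A)

/-- `E` has locally finite perimeter in `O ⊆ ℝ^{n+1}`. -/
def BVlocSet1 {n : ℕ} (O E : Set (Rn1 n)) : Prop :=
  ∀ A, CpCtd A O → BddAbove (perSet1 enorm1 E A)

/-- `E` is a minimizer of `P_Φ` (by compact perturbations) in `O ⊆ ℝ^{n+1}`. -/
def MinPer1 {n : ℕ} (Φ : Rn1 n → ℝ) (O E : Set (Rn1 n)) : Prop :=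
  BVlocSet1 O E ∧ ∀ A, CpCtd A O → ∀ F, BVlocSet1 O F →
    IsCompact (closure (symmDiff E F)) → closure (symmDiff E F) ⊆ A →
      Per1 Φ E A ≤ Per1 Φ F A

/-- The set of numbers whose supremum is the total variation `TV(u,A)`. -/
def varSet {n : ℕ} (A : Set (Rn n)) (u : Rn n → ℝ) : Set ℝ :=
  {r | ∃ η, TestN A (fun x => ‖x‖) η ∧ r = ∫ x in A, u x * divN η x}

/-- Total variation `TV(u,A)`. -/
def TV {n : ℕ} (u : Rn n → ℝ) (A : Set (Rn n)) : ℝ := sSup (varSet A u)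

/-- `u ∈ BV_loc(Ω̂)`. -/
def BVlocFun {n : ℕ} (Ω : Set (Rn n)) (u : Rn n → ℝ) : Prop :=
  (∀ A, CpCtd A Ω → IntegrableOn u A) ∧ ∀ A, CpCtd A Ω → BddAbove (varSet A u)

/-- The set of numbers whose supremum is `G_{Φ^o}(u,A)`. -/
def Gset {n : ℕ} (Φ : Rn1 n → ℝ) (A : Set (Rn n)) (u : Rn n → ℝ) : Set ℝ :=
  {r | ∃ η : Rn n → Rn1 n, ContDiff ℝ 1 η ∧ HasCompactSupport η ∧ tsupport η ⊆ A ∧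
    (∀ x, Φ (η x) ≤ 1) ∧ r = ∫ x in A, (u x * divN (fun y => (η y).1) x + (η x).2)}

/-- The functional `G_{Φ^o}(u,A)`. -/
def Gfun {n : ℕ} (Φ : Rn1 n → ℝ) (u : Rn n → ℝ) (A : Set (Rn n)) : ℝ := sSup (Gset Φ A u)

/-- `w` has compact support contained in `A`. -/
def CptSupp {n : ℕ} (A : Set (Rn n)) (w : Rn n → ℝ) : Prop :=
  IsCompact (tsupport w) ∧ tsupport w ⊆ A

/-- `u` is a minimizer of `G_{Φ^o}` by compact perturbations in `Ω̂`,
i.e. `u ∈ M_{Φ^o}(Ω̂)`. -/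
def MinG {n : ℕ} (Φ : Rn1 n → ℝ) (Ω : Set (Rn n)) (u : Rn n → ℝ) : Prop :=
  BVlocFun Ω u ∧ ∀ A, CpCtd A Ω → ∀ v, BVlocFun Ω v →
    CptSupp A (fun x => u x - v x) → Gfun Φ u A ≤ Gfun Φ v A

/-- `u` is a minimizer of the total variation by compact perturbations in `Ω̂`. -/
def MinTV {n : ℕ} (Ω : Set (Rn n)) (u : Rn n → ℝ) : Prop :=
  BVlocFun Ω u ∧ ∀ A, CpCtd A Ω → ∀ v, BVlocFun Ω v →
    CptSupp A (fun x => u x - v x) → TV u A ≤ TV v A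

/-- Subgraph of `u : Ω̂ → ℝ`. -/
def sg {n : ℕ} (Ω : Set (Rn n)) (u : Rn n → ℝ) : Set (Rn1 n) :=
  {p | p.1 ∈ Ω ∧ p.2 < u p.1}

/-- `S` is locally a Lipschitz graph at `p`. -/
def IsLocLipGraphAt {n : ℕ} (S : Set (Rn1 n)) (p : Rn1 n) : Prop :=
  ∃ U : Set (Rn1 n), IsOpen U ∧ p ∈ U ∧ ∃ e : Rn1 n, enorm1 e = 1 ∧
    ∃ g : Rn1 n → ℝ, (∃ L : NNReal, LipschitzOnWith L g {y | dotp y e = 0}) ∧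
      S ∩ U = {z | ∃ y, dotp y e = 0 ∧ z = y + g y • e} ∩ U

/-- `Φ` is a partially monotone norm on `ℝ^{n+1}`. -/
def PartMono {n : ℕ} (Φ : Rn1 n → ℝ) : Prop :=
  ∀ ξ η : Rn1 n, Φ (ξ.1, 0) ≤ Φ (η.1, 0) → Φ ((0 : Rn n), ξ.2) ≤ Φ ((0 : Rn n), η.2) →
    Φ ξ ≤ Φ η

end
noncomputable section Helpers
namespace MGC
open MeasureTheory Set Filter

variable {n : ℕ}

lemma dotn_self (x : Rn n) : dotn x x = ‖x‖^2 := by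
  rw [EuclideanSpace.norm_eq, Real.sq_sqrt (by positivity)]
  simp [dotn, sq]

lemma enorm1_eq (x : Rn1 n) : enorm1 x = Real.sqrt (‖x.1‖^2 + x.2^2) := by
  rw [enorm1, dotp, dotn_self]; ring_nf

lemma enorm1_nonneg (x : Rn1 n) : 0 ≤ enorm1 x := Real.sqrt_nonneg _

lemma norm_fst_le (x : Rn1 n) : ‖x.1‖ ≤ enorm1 x := by
  rw [enorm1_eq]
  calc ‖x.1‖ = Real.sqrt (‖x.1‖^2) := by rw [Real.sqrt_sq (norm_nonneg _)]
  _ ≤ _ := Real.sqrt_le_sqrt (by nlinarith [sq_nonneg x.2])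

lemma abs_snd_le (x : Rn1 n) : |x.2| ≤ enorm1 x := by
  rw [enorm1_eq]
  calc |x.2| = Real.sqrt (x.2^2) := (Real.sqrt_sq_eq_abs _).symm
  _ ≤ _ := Real.sqrt_le_sqrt (by nlinarith [sq_nonneg ‖x.1‖])

lemma abs_coord_le (ξ : Rn n) (i : Fin n) : |ξ i| ≤ ‖ξ‖ := by
  rw [EuclideanSpace.norm_eq]
  refine le_trans (le_of_eq (Real.sqrt_sq_eq_abs _).symm) (Real.sqrt_le_sqrt ?_)
  simp only [Real.norm_eq_abs, sq_abs]
  exact Finset.single_le_sum (f := fun j => ξ j ^ 2) (fun j _ => sq_nonneg _)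
    (Finset.mem_univ i)

variable {Φ : Rn1 n → ℝ}

lemma Phi_zero (hΦ : IsNorm1 Φ) : Φ 0 = 0 := by
  have := hΦ.2.1 0 0
  simpa using this

lemma Phi_nonneg (hΦ : IsNorm1 Φ) (x : Rn1 n) : 0 ≤ Φ x := by
  obtain ⟨c, hc, hle⟩ := hΦ.2.2
  exact le_trans (mul_nonneg hc.le (enorm1_nonneg x)) (hle x)

lemma Phi_add_le (hΦ : IsNorm1 Φ) (x y : Rn1 n) : Φ (x + y) ≤ Φ x + Φ y := by
  have h := hΦ.1.2 (mem_univ x) (mem_univ y) (le_of_lt one_half_pos)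
    (le_of_lt one_half_pos) (by norm_num)
  have h2 : Φ (x + y) = 2 * Φ ((1/2 : ℝ) • x + (1/2 : ℝ) • y) := by
    rw [show ((1/2 : ℝ) • x + (1/2 : ℝ) • y) = (1/2 : ℝ) • (x + y) by module,
      hΦ.2.1, show |(1/2 : ℝ)| = 1/2 by norm_num]
    ring
  simp only [smul_eq_mul] at h
  rw [h2]; nlinarith [h]

lemma Phi_sum_le (hΦ : IsNorm1 Φ) {ι : Type*} (s : Finset ι) (f : ι → Rn1 n) :
    Φ (∑ i ∈ s, f i) ≤ ∑ i ∈ s, Φ (f i) := by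
  classical
  induction s using Finset.induction_on with
  | empty => simp [Phi_zero hΦ]
  | insert _ _ hx ih =>
      rw [Finset.sum_insert hx, Finset.sum_insert hx]
      exact le_trans (Phi_add_le hΦ _ _) (by linarith)

/-- upper bound constant -/
def Cup (Φ : Rn1 n → ℝ) : ℝ := (∑ i : Fin n, Φ (EuclideanSpace.single i 1, 0)) + 1

lemma Cup_pos (hΦ : IsNorm1 Φ) : 0 < Cup Φ := by
  have : 0 ≤ ∑ i : Fin n, Φ (EuclideanSpace.single i 1, 0) :=
    Finset.sum_nonneg fun i _ => Phi_nonneg hΦ _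
  unfold Cup; linarith

lemma pair_eq_sum (ξ : Rn n) :
    ((ξ, 0) : Rn1 n) = ∑ i : Fin n, ξ i • ((EuclideanSpace.single i 1 : Rn n), (0:ℝ)) := by
  have h := (EuclideanSpace.basisFun (Fin n) ℝ).sum_repr ξ
  simp only [EuclideanSpace.basisFun_apply, EuclideanSpace.basisFun_repr] at h
  have h1 : (∑ i : Fin n, ξ i • ((EuclideanSpace.single i 1 : Rn n), (0:ℝ))).1
      = ∑ i : Fin n, ξ i • (EuclideanSpace.single i 1 : Rn n) := by
    rw [Prod.fst_sum]
    simp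
  have h2 : (∑ i : Fin n, ξ i • ((EuclideanSpace.single i 1 : Rn n), (0:ℝ))).2 = 0 := by
    rw [Prod.snd_sum]; simp
  refine Prod.ext ?_ ?_
  · rw [h1, h]
  · rw [h2]

lemma Phi_fst_le (hΦ : IsNorm1 Φ) (ξ : Rn n) (hξ : ‖ξ‖ ≤ 1) :
    Φ ((ξ, 0) : Rn1 n) ≤ Cup Φ - 1 := by
  rw [pair_eq_sum]
  refine le_trans (Phi_sum_le hΦ _ _) ?_
  unfold Cup
  rw [show (∑ i : Fin n, Φ (EuclideanSpace.single i 1, 0)) + 1 - 1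
    = ∑ i : Fin n, Φ (EuclideanSpace.single i 1, 0) by ring]
  refine Finset.sum_le_sum fun i _ => ?_
  rw [hΦ.2.1]
  have h1 : |ξ i| ≤ 1 := le_trans (abs_coord_le ξ i) hξ
  have h2 : 0 ≤ Φ ((EuclideanSpace.single i 1 : Rn n), (0:ℝ)) := Phi_nonneg hΦ _
  nlinarith

end MGC
end Helpers
noncomputable section Helpers2
namespace MGC
open MeasureTheory Set Filter

variable {n : ℕ}

lemma divN_continuous {η : Rn n → Rn n} (hη : ContDiff ℝ 1 η) :
    Continuous (divN η) := by
  refine continuous_finset_sum _ fun i _ => ?_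
  exact (EuclideanSpace.proj i).continuous.comp
    ((hη.continuous_fderiv one_ne_zero).clm_apply continuous_const)

lemma fderiv_zero_of_notMem_tsupport {F : Type*} [NormedAddCommGroup F]
    [NormedSpace ℝ F] {η : Rn n → F} {x : Rn n} (hx : x ∉ tsupport η) :
    fderiv ℝ η x = 0 := by
  have hev : η =ᶠ[nhds x] (fun _ => (0:F)) := by
    refine Filter.eventuallyEq_iff_exists_mem.2 ⟨(tsupport η)ᶜ, ?_, fun y hy => ?_⟩
    · exact (isClosed_tsupport η).isOpen_compl.mem_nhds hx
    · exact image_eq_zero_of_notMem_tsupport hy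
  rw [hev.fderiv_eq, fderiv_fun_const]
  rfl

lemma divN_zero_of_notMem_tsupport {η : Rn n → Rn n} {x : Rn n}
    (hx : x ∉ tsupport η) : divN η x = 0 := by
  unfold divN
  rw [fderiv_zero_of_notMem_tsupport hx]
  simp

lemma divN_support_subset {η : Rn n → Rn n} :
    Function.support (divN η) ⊆ tsupport η := fun x hx => by
  by_contra h
  exact hx (divN_zero_of_notMem_tsupport h)

lemma divN_hasCompactSupport {η : Rn n → Rn n} (hη : HasCompactSupport η) :
    HasCompactSupport (divN η) :=
  HasCompactSupport.mono' hη (divN_support_subset)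

lemma divN_bound {η : Rn n → Rn n} (hη : ContDiff ℝ 1 η)
    (hc : HasCompactSupport η) : ∃ C, 0 ≤ C ∧ ∀ x, |divN η x| ≤ C := by
  obtain ⟨C, hC⟩ := (divN_hasCompactSupport hc).exists_bound_of_continuous
    (divN_continuous hη)
  exact ⟨C, le_trans (norm_nonneg _) (hC 0), fun x => hC x⟩

lemma divN_add {η θ : Rn n → Rn n} (hη : ContDiff ℝ 1 η) (hθ : ContDiff ℝ 1 θ)
    (x : Rn n) : divN (fun y => η y + θ y) x = divN η x + divN θ x := by
  unfold divN
  rw [fderiv_fun_add ((hη.differentiable one_ne_zero) x) ((hθ.differentiable one_ne_zero) x)]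
  simp [Finset.sum_add_distrib]

lemma fderiv_eval (f : Rn n → ℝ) (x : Rn n) (v : Rn n) :
    fderiv ℝ f x v = ∑ i, v i * fderiv ℝ f x (EuclideanSpace.single i 1) := by
  have hv : v = ∑ i : Fin n, v i • (EuclideanSpace.single i 1 : Rn n) := by
    have h := (EuclideanSpace.basisFun (Fin n) ℝ).sum_repr v
    simp only [EuclideanSpace.basisFun_apply, EuclideanSpace.basisFun_repr] at h
    exact h.symm
  conv_lhs => rw [hv]
  rw [map_sum]
  simp [smul_eq_mul]

lemma divN_smul {f : Rn n → ℝ} {θ : Rn n → Rn n} (hf : ContDiff ℝ 1 f)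
    (hθ : ContDiff ℝ 1 θ) (x : Rn n) :
    divN (fun y => f y • θ y) x = f x * divN θ x + fderiv ℝ f x (θ x) := by
  unfold divN
  have h : ∀ i : Fin n,
      (fderiv ℝ (fun y => f y • θ y) x (EuclideanSpace.single i 1)) i
      = f x * (fderiv ℝ θ x (EuclideanSpace.single i 1)) i
        + fderiv ℝ f x (EuclideanSpace.single i 1) * θ x i := by
    intro i
    rw [fderiv_fun_smul ((hf.differentiable one_ne_zero) x) ((hθ.differentiable one_ne_zero) x)]
    simp [smul_eq_mul]
  simp only [h]
  rw [Finset.sum_add_distrib, ← Finset.mul_sum, fderiv_eval f x (θ x)]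
  congr 1
  exact Finset.sum_congr rfl fun i _ => mul_comm _ _

lemma divN_const_smul {θ : Rn n → Rn n} (hθ : ContDiff ℝ 1 θ) (c : ℝ) (x : Rn n) :
    divN (fun y => c • θ y) x = c * divN θ x := by
  rw [divN_smul contDiff_const hθ x]
  simp

end MGC
end Helpers2
noncomputable section Helpers3
namespace MGC
open MeasureTheory Set Filter

variable {n : ℕ}

/-- The functional integrand value. -/
def Rfun (u : Rn n → ℝ) (A : Set (Rn n)) (η : Rn n → Rn1 n) : ℝ :=
  ∫ x in A, (u x * divN (fun y => (η y).1) x + (η x).2)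

lemma measureA_lt_top {A O : Set (Rn n)} (hA : CpCtd A O) : volume A < ⊤ :=
  lt_of_le_of_lt (measure_mono subset_closure) hA.2.1.measure_lt_top

lemma integrableOn_of_bounded {A : Set (Rn n)} {g : Rn n → ℝ} {C : ℝ}
    (hAfin : volume A < ⊤) (hm : AEStronglyMeasurable g (volume.restrict A))
    (hb : ∀ x, |g x| ≤ C) : IntegrableOn g A := by
  refine Integrable.mono' (g := fun _ => C) ?_ hm (ae_of_all _ fun x => ?_)
  · exact integrableOn_const hAfin.ne
  · simpa using hb x

lemma integrableOn_mul_of_bounded {A : Set (Rn n)} {u g : Rn n → ℝ}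
    (hu : IntegrableOn u A) (hgm : AEStronglyMeasurable g (volume.restrict A))
    (hb : ∃ C, ∀ x, |g x| ≤ C) :
    IntegrableOn (fun x => u x * g x) A := by
  have h : IntegrableOn (fun x => g x * u x) A := by
    obtain ⟨C, hC⟩ := hb
    exact Integrable.bdd_mul (c := C) hu hgm (ae_of_all _ fun x => by simpa using hC x)
  have he : (fun x => u x * g x) = fun x => g x * u x := funext fun x => mul_comm _ _
  rw [he]; exact h

section PhiTests
variable {Φ : Rn1 n → ℝ} {c : ℝ}

lemma test_fst_norm_le (hc0 : 0 < c) (hcl : ∀ ξ, c * enorm1 ξ ≤ Φ ξ)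
    {η : Rn n → Rn1 n} (hη : ∀ x, Φ (η x) ≤ 1) (x : Rn n) : ‖(η x).1‖ ≤ 1 / c := by
  rw [le_div_iff₀ hc0, mul_comm]
  exact le_trans (mul_le_mul_of_nonneg_left (norm_fst_le (η x)) hc0.le)
    (le_trans (hcl (η x)) (hη x))

lemma test_snd_abs_le (hc0 : 0 < c) (hcl : ∀ ξ, c * enorm1 ξ ≤ Φ ξ)
    {η : Rn n → Rn1 n} (hη : ∀ x, Φ (η x) ≤ 1) (x : Rn n) : |(η x).2| ≤ 1 / c := by
  rw [le_div_iff₀ hc0, mul_comm]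
  exact le_trans (mul_le_mul_of_nonneg_left (abs_snd_le (η x)) hc0.le)
    (le_trans (hcl (η x)) (hη x))

/-- Components of a `Gset`-test field. -/
lemma fst_contDiff {η : Rn n → Rn1 n} (hη : ContDiff ℝ 1 η) :
    ContDiff ℝ 1 (fun y => (η y).1) := contDiff_fst.comp hη

lemma fst_hasCompactSupport {η : Rn n → Rn1 n} (hη : HasCompactSupport η) :
    HasCompactSupport (fun y => (η y).1) := by
  refine HasCompactSupport.mono' hη ?_
  intro x hx
  have : (η x).1 ≠ 0 := hx
  have hne : η x ≠ 0 := fun h => this (by rw [h]; rfl)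
  exact subset_closure hne

lemma snd_contDiff {η : Rn n → Rn1 n} (hη : ContDiff ℝ 1 η) :
    Continuous (fun y => (η y).2) := (contDiff_snd.comp hη).continuous

/-- Integrability of the `Gset` integrand. -/
lemma integrable_integrand {A O : Set (Rn n)} (hA : CpCtd A O)
    {u : Rn n → ℝ} (hu : IntegrableOn u A) {η : Rn n → Rn1 n}
    (h1 : ContDiff ℝ 1 η) (h2 : HasCompactSupport η)
    (hbd : ∃ C, ∀ x, |(η x).2| ≤ C) :
    IntegrableOn (fun x => u x * divN (fun y => (η y).1) x + (η x).2) A ∧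
    IntegrableOn (fun x => u x * divN (fun y => (η y).1) x) A ∧
    IntegrableOn (fun x => (η x).2) A := by
  have hd1 : IntegrableOn (fun x => u x * divN (fun y => (η y).1) x) A := by
    refine integrableOn_mul_of_bounded hu
      ((divN_continuous (fst_contDiff h1)).aestronglyMeasurable) ?_
    obtain ⟨C, _, hC⟩ := divN_bound (fst_contDiff h1) (fst_hasCompactSupport h2)
    exact ⟨C, hC⟩
  have hd2 : IntegrableOn (fun x => (η x).2) A := by
    obtain ⟨C, hC⟩ := hbd
    exact integrableOn_of_bounded (measureA_lt_top hA)
      (snd_contDiff h1).aestronglyMeasurable hC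
  exact ⟨hd1.add hd2, hd1, hd2⟩

lemma zero_mem_Gset {A : Set (Rn n)} {u : Rn n → ℝ} (hΦ : IsNorm1 Φ) :
    (0 : ℝ) ∈ Gset Φ A u := by
  refine ⟨fun _ => 0, contDiff_const, ?_, ?_, ?_, ?_⟩
  · rw [HasCompactSupport]
    simp [tsupport]
  · rw [tsupport]
    simp
  · intro x; rw [Phi_zero hΦ]; norm_num
  · have : ∀ x : Rn n, u x * divN (fun _ => ((0 : Rn1 n)).1) x + ((0:Rn1 n)).2 = 0 := by
      intro x
      have : divN (fun _ => ((0 : Rn1 n)).1) x = 0 := by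
        unfold divN
        rw [fderiv_fun_const]
        simp
      rw [this]; simp
    rw [MeasureTheory.integral_congr_ae (ae_of_all _ this)]
    simp

lemma Gfun_nonneg {A : Set (Rn n)} {u : Rn n → ℝ} (hΦ : IsNorm1 Φ)
    (hbdd : BddAbove (Gset Φ A u)) : 0 ≤ Gfun Φ u A :=
  le_csSup hbdd (zero_mem_Gset hΦ)

lemma smul_fst_test {η : Rn n → Rn1 n} (c' : ℝ) (hc' : 0 ≤ c')
    (hc1 : ∀ x, c' * ‖(η x).1‖ ≤ 1) (h1 : ContDiff ℝ 1 η)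
    (h2 : HasCompactSupport η) {A : Set (Rn n)} (h3 : tsupport η ⊆ A) :
    TestN A (fun x => ‖x‖) (fun y => c' • (η y).1) := by
  refine ⟨((fst_contDiff h1).const_smul c'), ?_, ?_, ?_⟩
  · refine HasCompactSupport.mono' (fst_hasCompactSupport h2) ?_
    intro x hx
    have : c' • (η x).1 ≠ 0 := hx
    have : (η x).1 ≠ 0 := fun h => this (by rw [h]; simp)
    exact subset_closure this
  · refine Subset.trans (closure_minimal (fun x hx => subset_closure ?_)
      (isClosed_tsupport η)) h3
    have : c' • (η x).1 ≠ 0 := hx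
    exact fun h => this (by rw [show η x = 0 from h]; simp)
  · intro x
    show ‖c' • (η x).1‖ ≤ 1
    rw [norm_smul]
    simpa [abs_of_nonneg hc'] using hc1 x

/-- Bounded above: `Gset` of a `BVloc` function. -/
lemma gset_bddAbove (hΦ : IsNorm1 Φ) {Ω : Set (Rn n)} {u : Rn n → ℝ}
    (hu : BVlocFun Ω u) {A : Set (Rn n)} (hA : CpCtd A Ω) :
    BddAbove (Gset Φ A u) := by
  obtain ⟨c, hc0, hcl⟩ := hΦ.2.2
  obtain ⟨M, hM⟩ := hu.2 A hA
  refine ⟨(1/c) * M + (1/c) * (volume A).toReal, ?_⟩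
  rintro r ⟨η, h1, h2, h3, h4, rfl⟩
  have huA : IntegrableOn u A := hu.1 A hA
  obtain ⟨hint, hint1, hint2⟩ := integrable_integrand hA huA h1 h2
    ⟨1/c, fun x => test_snd_abs_le hc0 hcl h4 x⟩
  rw [MeasureTheory.integral_add hint1 hint2]
  have hb1 : ∫ x in A, u x * divN (fun y => (η y).1) x ≤ (1/c) * M := by
    have hmem : (∫ x in A, u x * divN (fun y => c • (η y).1) x) ∈ varSet A u := by
      refine ⟨fun y => c • (η y).1, ?_, rfl⟩
      refine smul_fst_test c hc0.le (fun x => ?_) h1 h2 h3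
      calc c * ‖(η x).1‖ ≤ c * enorm1 (η x) :=
            mul_le_mul_of_nonneg_left (norm_fst_le (η x)) hc0.le
      _ ≤ Φ (η x) := hcl (η x)
      _ ≤ 1 := h4 x
    have hle := hM hmem
    have heq : ∫ x in A, u x * divN (fun y => c • (η y).1) x
        = c * ∫ x in A, u x * divN (fun y => (η y).1) x := by
      rw [← MeasureTheory.integral_const_mul]
      refine MeasureTheory.integral_congr_ae (ae_of_all _ fun x => ?_)
      dsimp only
      rw [divN_const_smul (fst_contDiff h1) c x]
      ring
    rw [heq] at hle
    set I := ∫ x in A, u x * divN (fun y => (η y).1) x with hI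
    have hpos : (0:ℝ) < 1/c := by positivity
    have hfs : (1/c) * (M - c * I) = 1/c * M - I := by field_simp
    linarith [mul_nonneg hpos.le (by linarith : (0:ℝ) ≤ M - c * I)]
  have hb2 : ∫ x in A, (η x).2 ≤ (1/c) * (volume A).toReal := by
    have : ∫ x in A, (η x).2 ≤ ∫ _x in A, (1/c : ℝ) := by
      refine setIntegral_mono_on hint2 (integrableOn_const (measureA_lt_top hA).ne)
        (hA.1.measurableSet) (fun x _ => ?_)
      exact le_trans (le_abs_self _) (test_snd_abs_le hc0 hcl h4 x)
    simpa [MeasureTheory.setIntegral_const, smul_eq_mul, mul_comm, Measure.real] using this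
  linarith

end PhiTests
end MGC
end Helpers3
noncomputable section Helpers4
namespace MGC
open MeasureTheory Set Filter

variable {n : ℕ}

lemma exists_cutoff {K U : Set (Rn n)} (hK : IsCompact K) (hU : IsOpen U)
    (hKU : K ⊆ U) :
    ∃ ζ : Rn n → ℝ, ContDiff ℝ 1 ζ ∧ HasCompactSupport ζ ∧ tsupport ζ ⊆ U ∧
      (∀ x, ζ x ∈ Icc (0:ℝ) 1) ∧ ∃ V, IsOpen V ∧ K ⊆ V ∧ ∀ x ∈ V, ζ x = 1 := by
  obtain ⟨K1, hK1c, hKK1, hK1U⟩ := exists_compact_between hK hU hKU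
  obtain ⟨K2, hK2c, hKK2, hK2K1⟩ := exists_compact_between hK isOpen_interior hKK1
  obtain ⟨f, hf0, hf1, hf01⟩ :=
    exists_contMDiffMap_zero_one_of_isClosed (modelWithCornersSelf ℝ (Rn n)) (n := (⊤ : ℕ∞))
      (isClosed_compl_iff.2 isOpen_interior : IsClosed ((interior K1)ᶜ))
      (hK2c.isClosed)
      (disjoint_compl_left_iff_subset.2 hK2K1)
  have hsmooth : ContDiff ℝ 1 (f : Rn n → ℝ) := by
    have := f.contMDiff
    rw [contMDiff_iff_contDiff] at this
    exact this.of_le (by exact_mod_cast le_top)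
  refine ⟨f, hsmooth, ?_, ?_, hf01, interior K2, isOpen_interior, hKK2, ?_⟩
  · have hsub : tsupport (f : Rn n → ℝ) ⊆ K1 := by
      refine Subset.trans (closure_minimal ?_ (hK1c.isClosed)) (le_refl _)
      intro x hx
      by_contra hxK
      have hxc : x ∈ (interior K1)ᶜ := fun hi => hxK (interior_subset hi)
      exact hx (hf0 hxc)
    exact IsCompact.of_isClosed_subset hK1c (isClosed_tsupport _) hsub
  · refine Subset.trans (closure_minimal ?_ (hK1c.isClosed)) hK1U
    intro x hx
    by_contra hxK
    have hxc : x ∈ (interior K1)ᶜ := fun hi => hxK (interior_subset hi)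
    exact hx (hf0 hxc)
  · intro x hx
    exact hf1 (interior_subset hx)

/-- Intermediate open set: `closure A ⊆ A'`, `CpCtd A' O`. -/
lemma exists_intermediate {A O : Set (Rn n)} (hA : CpCtd A O) (hO : IsOpen O) :
    ∃ A', CpCtd A' O ∧ closure A ⊆ A' := by
  obtain ⟨L, hLc, hAL, hLO⟩ := exists_compact_between hA.2.1 hO hA.2.2
  refine ⟨interior L, ⟨isOpen_interior, ?_, ?_⟩, hAL⟩
  · exact IsCompact.of_isClosed_subset hLc isClosed_closure
      (closure_minimal interior_subset hLc.isClosed)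
  · exact Subset.trans (closure_minimal interior_subset hLc.isClosed) hLO

end MGC
end Helpers4
noncomputable section Helpers5
namespace MGC
open MeasureTheory Set Filter

variable {n : ℕ}

lemma integrableOn_mul_divN {A : Set (Rn n)} {u : Rn n → ℝ}
    (hu : IntegrableOn u A) {g : Rn n → Rn n} (hg : ContDiff ℝ 1 g)
    (hgc : HasCompactSupport g) :
    IntegrableOn (fun x => u x * divN g x) A := by
  refine integrableOn_mul_of_bounded hu (divN_continuous hg).aestronglyMeasurable ?_
  obtain ⟨C, _, hC⟩ := divN_bound hg hgc
  exact ⟨C, hC⟩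

lemma gradPair_continuous {ζ : Rn n → ℝ} (hζ : ContDiff ℝ 1 ζ)
    {g : Rn n → Rn n} (hg : Continuous g) :
    Continuous (fun x => fderiv ℝ ζ x (g x)) :=
  (hζ.continuous_fderiv one_ne_zero).clm_apply hg

lemma fderiv_bound {ζ : Rn n → ℝ} (hζ : ContDiff ℝ 1 ζ)
    (hζc : HasCompactSupport ζ) : ∃ L, 0 ≤ L ∧ ∀ x, ‖fderiv ℝ ζ x‖ ≤ L := by
  obtain ⟨L, hL⟩ := (hζc.fderiv (𝕜 := ℝ)).exists_bound_of_continuous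
    ((hζ.continuous_fderiv one_ne_zero))
  exact ⟨L, le_trans (norm_nonneg _) (hL 0), fun x => hL x⟩

lemma integrableOn_cross {A : Set (Rn n)} {u ζ : Rn n → ℝ}
    (hu : IntegrableOn u A) (hζ : ContDiff ℝ 1 ζ) (hζc : HasCompactSupport ζ)
    {g : Rn n → Rn n} (hgc : Continuous g) (hgb : ∃ C, ∀ x, ‖g x‖ ≤ C) :
    IntegrableOn (fun x => u x * fderiv ℝ ζ x (g x)) A := by
  refine integrableOn_mul_of_bounded hu
    (gradPair_continuous hζ hgc).aestronglyMeasurable ?_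
  obtain ⟨L, hL0, hL⟩ := fderiv_bound hζ hζc
  obtain ⟨C, hC⟩ := hgb
  refine ⟨L * C, fun x => ?_⟩
  calc |fderiv ℝ ζ x (g x)| ≤ ‖fderiv ℝ ζ x‖ * ‖g x‖ :=
        (fderiv ℝ ζ x).le_opNorm (g x)
  _ ≤ L * C := by
      have : 0 ≤ ‖g x‖ := norm_nonneg _
      have h2 := hC x
      have h1 := hL x
      nlinarith [norm_nonneg (fderiv ℝ ζ x)]

/-- `∫_A f g ≤ L ∫_A |f|` when `|g| ≤ L`. -/
lemma setIntegral_mul_le {A : Set (Rn n)} (hA : MeasurableSet A)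
    {f g : Rn n → ℝ} {L : ℝ}
    (hf : IntegrableOn f A) (hfg : IntegrableOn (fun x => f x * g x) A)
    (hb : ∀ x, |g x| ≤ L) :
    ∫ x in A, f x * g x ≤ L * ∫ x in A, |f x| := by
  have hL0 : 0 ≤ L := le_trans (abs_nonneg _) (hb 0)
  have habs : (fun x => |f x * g x|) = fun x => |f x| * |g x| :=
    funext fun x => abs_mul _ _
  calc ∫ x in A, f x * g x ≤ |∫ x in A, f x * g x| := le_abs_self _
  _ ≤ ∫ x in A, |f x * g x| := by
      have := norm_integral_le_integral_norm (μ := volume.restrict A)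
        (fun x => f x * g x)
      simpa only [Real.norm_eq_abs] using this
  _ ≤ ∫ x in A, |f x| * L := by
      rw [habs]
      refine setIntegral_mono_on ?_ (hf.abs.mul_const L) hA fun x _ => ?_
      · rw [← habs]; exact hfg.abs
      · exact mul_le_mul_of_nonneg_left (hb x) (abs_nonneg _)
  _ = L * ∫ x in A, |f x| := by rw [integral_mul_const]; ring

/-- The core pointwise identity. -/
lemma mix_div_pointwise {ζ u0 w : Rn n → ℝ} (hζ : ContDiff ℝ 1 ζ)
    {g : Rn n → Rn n} (hg : ContDiff ℝ 1 g) (t : ℝ) (x : Rn n) :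
    ((1 - ζ x) * u0 x + ζ x * w x) * divN g x + t
      = (u0 x * divN (fun y => (1 - ζ y) • g y) x + (1 - ζ x) * t)
        + ((w x * divN (fun y => ζ y • g y) x + ζ x * t)
        + (u0 x - w x) * (fderiv ℝ ζ x (g x))) := by
  rw [divN_smul (contDiff_const.sub hζ) hg, divN_smul hζ hg,
    fderiv_const_sub (1:ℝ)]
  simp only [ContinuousLinearMap.neg_apply]
  ring

/-- test field multiplied by a `[0,1]`-valued `C¹` cutoff is a test field. -/
lemma smul_cutoff_testN {A : Set (Rn n)} {θ : Rn n → Rn n}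
    (hθ : TestN A (fun x => ‖x‖) θ) {f : Rn n → ℝ} (hf : ContDiff ℝ 1 f)
    (hf1 : ∀ x, |f x| ≤ 1) : TestN A (fun x => ‖x‖) (fun y => f y • θ y) := by
  obtain ⟨h1, h2, h3, h4⟩ := hθ
  refine ⟨hf.smul h1, ?_, ?_, ?_⟩
  · refine HasCompactSupport.mono' h2 ?_
    intro x hx
    have : f x • θ x ≠ 0 := hx
    exact subset_closure (fun h => this (by rw [h]; simp))
  · refine Subset.trans (closure_minimal (fun x hx => subset_closure ?_)
      (isClosed_tsupport θ)) h3
    have : f x • θ x ≠ 0 := hx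
    exact fun h => this (by rw [show θ x = 0 from h]; simp)
  · intro x
    show ‖f x • θ x‖ ≤ 1
    rw [norm_smul]
    have := h4 x
    have h0 : ‖θ x‖ ≤ 1 := this
    have := hf1 x
    calc ‖f x‖ * ‖θ x‖ ≤ 1 * 1 := by
          refine mul_le_mul ?_ h0 (norm_nonneg _) zero_le_one
          simpa [Real.norm_eq_abs] using hf1 x
    _ = 1 := by ring

/-- `BVloc` is stable under cutoff mixing. -/
lemma bvloc_mix {Ω : Set (Rn n)} {u0 w ζ : Rn n → ℝ}
    (hu0 : BVlocFun Ω u0) (hw : BVlocFun Ω w) (hζ : ContDiff ℝ 1 ζ)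
    (hζc : HasCompactSupport ζ) (hζ01 : ∀ x, ζ x ∈ Icc (0:ℝ) 1) :
    BVlocFun Ω (fun x => (1 - ζ x) * u0 x + ζ x * w x) := by
  obtain ⟨L, hL0, hL⟩ := fderiv_bound hζ hζc
  constructor
  · intro A hA
    have h1 : IntegrableOn (fun x => (1 - ζ x) * u0 x) A := by
      have := integrableOn_mul_of_bounded (g := fun x => 1 - ζ x) (hu0.1 A hA)
        (((contDiff_const (c := (1:ℝ))).sub hζ).continuous.aestronglyMeasurable) ⟨1, fun x => by
          have h := hζ01 x
          show |1 - ζ x| ≤ 1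
          rw [abs_le]; exact ⟨by linarith [h.2], by linarith [h.1]⟩⟩
      simpa [mul_comm] using this
    have h2 : IntegrableOn (fun x => ζ x * w x) A := by
      have := integrableOn_mul_of_bounded (hw.1 A hA)
        (hζ.continuous.aestronglyMeasurable) ⟨1, fun x => by
          have h := hζ01 x
          rw [abs_le]; exact ⟨by linarith [h.1], by linarith [h.2]⟩⟩
      simpa [mul_comm] using this
    exact h1.add h2
  · intro A hA
    obtain ⟨M0, hM0⟩ := hu0.2 A hA
    obtain ⟨Mw, hMw⟩ := hw.2 A hA
    have hu0A := hu0.1 A hA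
    have hwA := hw.1 A hA
    refine ⟨M0 + Mw + L * ∫ x in A, (|u0 x| + |w x|), ?_⟩
    rintro r ⟨θ, ⟨ht1, ht2, ht3, ht4⟩, rfl⟩
    -- decompose the integral
    have hid : ∀ x, ((1 - ζ x) * u0 x + ζ x * w x) * divN θ x
        = (u0 x * divN (fun y => (1 - ζ y) • θ y) x)
          + ((w x * divN (fun y => ζ y • θ y) x)
          + (u0 x - w x) * (fderiv ℝ ζ x (θ x))) := by
      intro x
      have := mix_div_pointwise (u0 := u0) (w := w) hζ ht1 0 x
      simpa using this
    have hb1 : ∀ x, ‖θ x‖ ≤ 1 := fun x => ht4 x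
    have hT1 : TestN A (fun x => ‖x‖) (fun y => (1 - ζ y) • θ y) := by
      refine smul_cutoff_testN ⟨ht1, ht2, ht3, ht4⟩ (contDiff_const.sub hζ) fun x => ?_
      have h := hζ01 x
      rw [abs_le]; exact ⟨by linarith [h.2], by linarith [h.1]⟩
    have hT2 : TestN A (fun x => ‖x‖) (fun y => ζ y • θ y) := by
      refine smul_cutoff_testN ⟨ht1, ht2, ht3, ht4⟩ hζ fun x => ?_
      have h := hζ01 x
      rw [abs_le]; exact ⟨by linarith [h.1], by linarith [h.2]⟩
    have hi1 : IntegrableOn (fun x => u0 x * divN (fun y => (1 - ζ y) • θ y) x) A :=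
      integrableOn_mul_divN hu0A hT1.1 hT1.2.1
    have hi2 : IntegrableOn (fun x => w x * divN (fun y => ζ y • θ y) x) A :=
      integrableOn_mul_divN hwA hT2.1 hT2.2.1
    have hi3 : IntegrableOn (fun x => (u0 x - w x) * (fderiv ℝ ζ x (θ x))) A :=
      integrableOn_cross (hu0A.sub hwA) hζ hζc ht1.continuous
        ⟨1, hb1⟩
    have hi23 : IntegrableOn (fun x => w x * divN (fun y => ζ y • θ y) x
        + (u0 x - w x) * (fderiv ℝ ζ x (θ x))) A := hi2.add hi3
    have hsplit : ∫ x in A, ((1 - ζ x) * u0 x + ζ x * w x) * divN θ x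
        = (∫ x in A, u0 x * divN (fun y => (1 - ζ y) • θ y) x)
          + ((∫ x in A, w x * divN (fun y => ζ y • θ y) x)
          + ∫ x in A, (u0 x - w x) * (fderiv ℝ ζ x (θ x))) := by
      rw [integral_congr_ae (ae_of_all _ hid), integral_add hi1 hi23,
        integral_add hi2 hi3]
    rw [hsplit]
    have e1 : (∫ x in A, u0 x * divN (fun y => (1 - ζ y) • θ y) x) ≤ M0 :=
      hM0 ⟨_, hT1, rfl⟩
    have e2 : (∫ x in A, w x * divN (fun y => ζ y • θ y) x) ≤ Mw :=
      hMw ⟨_, hT2, rfl⟩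
    have e3 : (∫ x in A, (u0 x - w x) * (fderiv ℝ ζ x (θ x)))
        ≤ L * ∫ x in A, (|u0 x| + |w x|) := by
      have hstep := setIntegral_mul_le hA.1.measurableSet (hu0A.sub hwA) hi3
        (L := L) (fun x => by
          calc |fderiv ℝ ζ x (θ x)| ≤ ‖fderiv ℝ ζ x‖ * ‖θ x‖ :=
                (fderiv ℝ ζ x).le_opNorm (θ x)
          _ ≤ L * 1 := mul_le_mul (hL x) (hb1 x) (norm_nonneg _) hL0
          _ = L := mul_one L)
      refine le_trans hstep (mul_le_mul_of_nonneg_left ?_ hL0)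
      refine setIntegral_mono_on (hu0A.sub hwA).abs (hu0A.abs.add hwA.abs)
        hA.1.measurableSet fun x _ => ?_
      exact abs_sub (u0 x) (w x)
    linarith

end MGC
end Helpers5
noncomputable section Helpers6
namespace MGC
open MeasureTheory Set Filter

variable {n : ℕ}

/-- zero pair field has zero integrand. -/
lemma zero_field_integral (u : Rn n → ℝ) (A : Set (Rn n)) :
    ∫ x in A, (u x * divN (fun _ => ((0 : Rn1 n)).1) x + ((0 : Rn1 n)).2) = 0 := by
  have h : ∀ x : Rn n, u x * divN (fun _ => ((0 : Rn1 n)).1) x + ((0:Rn1 n)).2 = 0 := by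
    intro x
    have hd : divN (fun _ : Rn n => ((0 : Rn1 n)).1) x = 0 := by
      unfold divN
      rw [fderiv_fun_const]
      simp
    rw [hd]; simp
  rw [integral_congr_ae (ae_of_all _ h)]
  simp

lemma key {Ω : Set (Rn n)} {Φ : Rn1 n → ℝ} (hΦ : IsNorm1 Φ)
    {c : ℝ} (hc0 : 0 < c) (hcl : ∀ ξ, c * enorm1 ξ ≤ Φ ξ)
    {u0 w : Rn n → ℝ} (hu0 : MinG Φ Ω u0) (hw : BVlocFun Ω w)
    {A : Set (Rn n)} (hA : CpCtd A Ω)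
    {ζ : Rn n → ℝ} (hζ : ContDiff ℝ 1 ζ) (hζc : HasCompactSupport ζ)
    (hζA : tsupport ζ ⊆ A) (hζ01 : ∀ x, ζ x ∈ Icc (0:ℝ) 1)
    {V : Set (Rn n)} (hV : IsOpen V) (hζV : ∀ x ∈ V, ζ x = 1)
    {η : Rn n → Rn1 n} (hη1 : ContDiff ℝ 1 η) (hη2 : HasCompactSupport η)
    (hη3 : tsupport η ⊆ V) (hη3' : tsupport η ⊆ A) (hη4 : ∀ x, Φ (η x) ≤ 1) :
    (∫ x in A, (u0 x * divN (fun y => (η y).1) x + (η x).2))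
      ≤ Gfun Φ w A + (1/c) * ∫ x in A, |u0 x - w x| * ‖fderiv ℝ ζ x‖ := by
  have huA : IntegrableOn u0 A := hu0.1.1 A hA
  have hwA : IntegrableOn w A := hw.1 A hA
  set F : Set (Rn n) := closure {x | ζ x ≠ 1} with hF
  set Sset : Set ℝ := {r | ∃ θ : Rn n → Rn1 n,
    (ContDiff ℝ 1 θ ∧ HasCompactSupport θ ∧ tsupport θ ⊆ A ∧ ∀ x, Φ (θ x) ≤ 1) ∧
    tsupport θ ⊆ F ∧
    r = ∫ x in A, (u0 x * divN (fun y => (θ y).1) x + (θ x).2)} with hSset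
  have hSsub : Sset ⊆ Gset Φ A u0 := by
    rintro r ⟨θ, ⟨h1, h2, h3, h4⟩, _, rfl⟩
    exact ⟨θ, h1, h2, h3, h4, rfl⟩
  have hGbdd : BddAbove (Gset Φ A u0) := gset_bddAbove hΦ hu0.1 hA
  have hSbdd : BddAbove Sset := hGbdd.mono hSsub
  have hSne : Sset.Nonempty := by
    refine ⟨0, fun _ => 0, ⟨contDiff_const, ?_, ?_, ?_⟩, ?_, (zero_field_integral u0 A).symm⟩
    · rw [HasCompactSupport]; simp [tsupport]
    · rw [tsupport]; simp
    · intro x; rw [Phi_zero hΦ]; norm_num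
    · rw [tsupport]; simp
  -- the comparison function
  set vk : Rn n → ℝ := fun x => (1 - ζ x) * u0 x + ζ x * w x with hvk
  have hvkBV : BVlocFun Ω vk := bvloc_mix hu0.1 hw hζ hζc hζ01
  have hcpt : CptSupp A (fun x => u0 x - vk x) := by
    have heq : (fun x => u0 x - vk x) = fun x => ζ x * (u0 x - w x) := by
      funext x; simp only [hvk]; ring
    rw [heq]
    constructor
    · exact IsCompact.of_isClosed_subset hζc (isClosed_tsupport _)
        tsupport_mul_subset_left
    · exact Subset.trans tsupport_mul_subset_left hζA
  have hmin : Gfun Φ u0 A ≤ Gfun Φ vk A := hu0.2 A hA vk hvkBV hcpt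
  set E : ℝ := ∫ x in A, |u0 x - w x| * ‖fderiv ℝ ζ x‖ with hE
  obtain ⟨L, hL0, hL⟩ := fderiv_bound hζ hζc
  have hEint : IntegrableOn (fun x => |u0 x - w x| * ‖fderiv ℝ ζ x‖) A := by
    refine integrableOn_mul_of_bounded (huA.sub hwA).abs
      ((hζ.continuous_fderiv one_ne_zero).norm.aestronglyMeasurable) ⟨L, fun x => ?_⟩
    rw [abs_of_nonneg (norm_nonneg _)]; exact hL x
  -- Claim 2 : Gfun Φ vk A ≤ sSup Sset + (Gfun Φ w A + (1/c) * E)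
  have claim2 : Gfun Φ vk A ≤ sSup Sset + (Gfun Φ w A + (1/c) * E) := by
    refine csSup_le ⟨0, zero_mem_Gset hΦ⟩ ?_
    rintro r ⟨θ, h1, h2, h3, h4, rfl⟩
    set Θ1 : Rn n → Rn1 n := fun y => (1 - ζ y) • θ y with hΘ1
    set Θ2 : Rn n → Rn1 n := fun y => ζ y • θ y with hΘ2
    have hΘ1c : ContDiff ℝ 1 Θ1 := (contDiff_const.sub hζ).smul h1
    have hΘ2c : ContDiff ℝ 1 Θ2 := hζ.smul h1
    have hΘ1s : HasCompactSupport Θ1 := by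
      refine HasCompactSupport.mono' h2 ?_
      intro x hx
      refine subset_closure (fun h0 => hx ?_)
      show (1 - ζ x) • θ x = 0
      rw [h0]; simp
    have hΘ2s : HasCompactSupport Θ2 := by
      refine HasCompactSupport.mono' h2 ?_
      intro x hx
      refine subset_closure (fun h0 => hx ?_)
      show ζ x • θ x = 0
      rw [h0]; simp
    have hΘ1t : tsupport Θ1 ⊆ A := Subset.trans (tsupport_smul_subset_right _ _) h3
    have hΘ2t : tsupport Θ2 ⊆ A := Subset.trans (tsupport_smul_subset_right _ _) h3
    have hΘ1Φ : ∀ x, Φ (Θ1 x) ≤ 1 := by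
      intro x
      rw [hΘ1]
      show Φ ((1 - ζ x) • θ x) ≤ 1
      rw [hΦ.2.1]
      have h01 := hζ01 x
      have : |1 - ζ x| ≤ 1 := by rw [abs_le]; exact ⟨by linarith [h01.2], by linarith [h01.1]⟩
      calc |1 - ζ x| * Φ (θ x) ≤ 1 * 1 :=
            mul_le_mul this (h4 x) (Phi_nonneg hΦ _) zero_le_one
      _ = 1 := one_mul 1
    have hΘ2Φ : ∀ x, Φ (Θ2 x) ≤ 1 := by
      intro x
      rw [hΘ2]
      show Φ (ζ x • θ x) ≤ 1
      rw [hΦ.2.1]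
      have h01 := hζ01 x
      have : |ζ x| ≤ 1 := by rw [abs_le]; exact ⟨by linarith [h01.1], by linarith [h01.2]⟩
      calc |ζ x| * Φ (θ x) ≤ 1 * 1 :=
            mul_le_mul this (h4 x) (Phi_nonneg hΦ _) zero_le_one
      _ = 1 := one_mul 1
    -- pointwise decomposition
    have hid : ∀ x, vk x * divN (fun y => (θ y).1) x + (θ x).2
        = (u0 x * divN (fun y => (Θ1 y).1) x + (Θ1 x).2)
          + ((w x * divN (fun y => (Θ2 y).1) x + (Θ2 x).2)
          + (u0 x - w x) * (fderiv ℝ ζ x ((θ x).1))) := by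
      intro x
      have := mix_div_pointwise (u0 := u0) (w := w) hζ (fst_contDiff h1) ((θ x).2) x
      exact this
    -- integrability
    obtain ⟨hiP1, _, _⟩ := integrable_integrand hA huA hΘ1c hΘ1s
      ⟨1/c, fun x => test_snd_abs_le hc0 hcl hΘ1Φ x⟩
    obtain ⟨hiP2, _, _⟩ := integrable_integrand hA hwA hΘ2c hΘ2s
      ⟨1/c, fun x => test_snd_abs_le hc0 hcl hΘ2Φ x⟩
    have hiP3 : IntegrableOn (fun x => (u0 x - w x) * (fderiv ℝ ζ x ((θ x).1))) A :=
      integrableOn_cross (huA.sub hwA) hζ hζc (fst_contDiff h1).continuous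
        ⟨1/c, fun x => test_fst_norm_le hc0 hcl h4 x⟩
    have hiP23 : IntegrableOn (fun x =>
        (w x * divN (fun y => (Θ2 y).1) x + (Θ2 x).2)
        + (u0 x - w x) * (fderiv ℝ ζ x ((θ x).1))) A := hiP2.add hiP3
    have hsplit : ∫ x in A, (vk x * divN (fun y => (θ y).1) x + (θ x).2)
        = (∫ x in A, (u0 x * divN (fun y => (Θ1 y).1) x + (Θ1 x).2))
          + ((∫ x in A, (w x * divN (fun y => (Θ2 y).1) x + (Θ2 x).2))
          + ∫ x in A, (u0 x - w x) * (fderiv ℝ ζ x ((θ x).1))) := by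
      rw [integral_congr_ae (ae_of_all _ hid), integral_add hiP1 hiP23,
        integral_add hiP2 hiP3]
    rw [hsplit]
    have e1 : (∫ x in A, (u0 x * divN (fun y => (Θ1 y).1) x + (Θ1 x).2)) ≤ sSup Sset := by
      refine le_csSup hSbdd ⟨Θ1, ⟨hΘ1c, hΘ1s, hΘ1t, hΘ1Φ⟩, ?_, rfl⟩
      refine closure_minimal (fun x hx => subset_closure ?_) isClosed_closure
      intro h1x
      refine hx ?_
      show (1 - ζ x) • θ x = 0
      rw [h1x]; simp
    have e2 : (∫ x in A, (w x * divN (fun y => (Θ2 y).1) x + (Θ2 x).2)) ≤ Gfun Φ w A :=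
      le_csSup (gset_bddAbove hΦ hw hA) ⟨Θ2, hΘ2c, hΘ2s, hΘ2t, hΘ2Φ, rfl⟩
    have e3 : (∫ x in A, (u0 x - w x) * (fderiv ℝ ζ x ((θ x).1))) ≤ (1/c) * E := by
      have hdom : IntegrableOn
          (fun x => (1/c) * (|u0 x - w x| * ‖fderiv ℝ ζ x‖)) A := by
        exact hEint.const_mul _
      have hpt : ∀ x ∈ A, (u0 x - w x) * (fderiv ℝ ζ x ((θ x).1))
          ≤ (1/c) * (|u0 x - w x| * ‖fderiv ℝ ζ x‖) := by
        intro x _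
        have h1 : |fderiv ℝ ζ x ((θ x).1)| ≤ ‖fderiv ℝ ζ x‖ * (1/c) := by
          calc |fderiv ℝ ζ x ((θ x).1)| ≤ ‖fderiv ℝ ζ x‖ * ‖(θ x).1‖ :=
                (fderiv ℝ ζ x).le_opNorm ((θ x).1)
          _ ≤ ‖fderiv ℝ ζ x‖ * (1/c) :=
                mul_le_mul_of_nonneg_left (test_fst_norm_le hc0 hcl h4 x) (norm_nonneg _)
        calc (u0 x - w x) * (fderiv ℝ ζ x ((θ x).1))
            ≤ |(u0 x - w x) * (fderiv ℝ ζ x ((θ x).1))| := le_abs_self _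
        _ = |u0 x - w x| * |fderiv ℝ ζ x ((θ x).1)| := abs_mul _ _
        _ ≤ |u0 x - w x| * (‖fderiv ℝ ζ x‖ * (1/c)) :=
              mul_le_mul_of_nonneg_left h1 (abs_nonneg _)
        _ = (1/c) * (|u0 x - w x| * ‖fderiv ℝ ζ x‖) := by ring
      have := setIntegral_mono_on hiP3 hdom hA.1.measurableSet hpt
      rw [integral_const_mul] at this
      exact this
    linarith
  -- Claim 3 : superadditivity against fields supported away from V
  have claim3 : ∀ r ∈ Sset,
      (∫ x in A, (u0 x * divN (fun y => (η y).1) x + (η x).2)) + r ≤ Gfun Φ vk A := by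
    rintro r ⟨θ, ⟨h1, h2, h3, h4⟩, hFs, rfl⟩
    have hVF : ∀ x ∈ V, x ∉ F := by
      intro x hxV hxF
      obtain ⟨y, hyV, hyS⟩ := mem_closure_iff.1 hxF V hV hxV
      exact hyS (hζV y hyV)
    have hdisj : ∀ x, η x = 0 ∨ θ x = 0 := by
      intro x
      by_cases hθx : θ x = 0
      · exact Or.inr hθx
      · left
        by_contra hηx
        have hxV : x ∈ V := hη3 (subset_closure hηx)
        have hxF : x ∈ F := hFs (subset_closure hθx)
        exact hVF x hxV hxF
    set ηθ : Rn n → Rn1 n := fun x => η x + θ x with hηθ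
    have hp1 : ContDiff ℝ 1 ηθ := hη1.add h1
    have hp2 : HasCompactSupport ηθ := hη2.add h2
    have hp3 : tsupport ηθ ⊆ A := by
      have hsub : Function.support ηθ ⊆ tsupport η ∪ tsupport θ := by
        intro x hx
        by_cases h0 : η x = 0
        · right
          refine subset_closure (fun hθ0 => hx ?_)
          show η x + θ x = 0
          rw [h0, hθ0]; simp
        · exact Or.inl (subset_closure h0)
      refine Subset.trans (closure_minimal hsub
        ((isClosed_tsupport η).union (isClosed_tsupport θ))) ?_
      exact union_subset hη3' h3
    have hp4 : ∀ x, Φ (ηθ x) ≤ 1 := by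
      intro x
      rcases hdisj x with h0 | h0
      · show Φ (η x + θ x) ≤ 1
        rw [h0, zero_add]; exact h4 x
      · show Φ (η x + θ x) ≤ 1
        rw [h0, add_zero]; exact hη4 x
    have hiη := (integrable_integrand hA huA hη1 hη2
      ⟨1/c, fun x => test_snd_abs_le hc0 hcl hη4 x⟩).1
    have hiθ := (integrable_integrand hA huA h1 h2
      ⟨1/c, fun x => test_snd_abs_le hc0 hcl h4 x⟩).1
    have hidsum : ∀ x, (u0 x * divN (fun y => (ηθ y).1) x + (ηθ x).2)
        = (u0 x * divN (fun y => (η y).1) x + (η x).2)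
          + (u0 x * divN (fun y => (θ y).1) x + (θ x).2) := by
      intro x
      have hdadd : divN (fun y => (ηθ y).1) x
          = divN (fun y => (η y).1) x + divN (fun y => (θ y).1) x := by
        have := divN_add (fst_contDiff hη1) (fst_contDiff h1) x
        exact this
      rw [hdadd, show (ηθ x).2 = (η x).2 + (θ x).2 from rfl]; ring
    have hsum : (∫ x in A, (u0 x * divN (fun y => (ηθ y).1) x + (ηθ x).2))
        = (∫ x in A, (u0 x * divN (fun y => (η y).1) x + (η x).2))
          + (∫ x in A, (u0 x * divN (fun y => (θ y).1) x + (θ x).2)) := by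
      rw [integral_congr_ae (ae_of_all _ hidsum), integral_add hiη hiθ]
    have hmem : (∫ x in A, (u0 x * divN (fun y => (ηθ y).1) x + (ηθ x).2))
        ∈ Gset Φ A u0 := ⟨ηθ, hp1, hp2, hp3, hp4, rfl⟩
    have := le_csSup hGbdd hmem
    rw [hsum] at this
    exact le_trans this hmin
  -- combine
  have hfin : sSup Sset ≤ Gfun Φ vk A
      - (∫ x in A, (u0 x * divN (fun y => (η y).1) x + (η x).2)) := by
    refine csSup_le hSne fun r hr => ?_
    have := claim3 r hr
    linarith
  linarith [hfin, le_trans hmin claim2]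

end MGC
end Helpers6
noncomputable section Helpers7
namespace MGC
open MeasureTheory Set Filter

variable {n : ℕ}

lemma bvloc_zero {Ω : Set (Rn n)} : BVlocFun Ω (fun _ => (0:ℝ)) := by
  constructor
  · intro A _
    exact integrableOn_zero
  · intro A _
    refine ⟨0, ?_⟩
    rintro r ⟨θ, _, rfl⟩
    simp

/-- Integral over a bigger set equals integral over the smaller set when the
integrand vanishes outside. -/
lemma setIntegral_shrink {A A' : Set (Rn n)} (hAm : MeasurableSet A)
    (hA'm : MeasurableSet A') (hsub : A ⊆ A') {f : Rn n → ℝ}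
    (hf : IntegrableOn f A') (h0 : ∀ x ∉ A, f x = 0) :
    ∫ x in A', f x = ∫ x in A, f x := by
  have hd : Disjoint A (A' \ A) := disjoint_sdiff_right.mono_left le_rfl
  have hm2 : MeasurableSet (A' \ A) := hA'm.diff hAm
  rw [← union_diff_cancel hsub,
    setIntegral_union hd hm2 (hf.mono_set (subset_union_left.trans (union_diff_cancel hsub).le))
      (hf.mono_set ((diff_subset).trans le_rfl))]
  · have : ∫ x in A' \ A, f x = 0 := by
      rw [setIntegral_congr_fun hm2 (fun x hx => h0 x hx.2)]
      simp
    rw [this, add_zero]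

lemma tendsto_integral_mul_div {A : Set (Rn n)} (hAm : MeasurableSet A)
    {u : Rn n → ℝ} {uk : ℕ → Rn n → ℝ}
    (hu : IntegrableOn u A) (huk : ∀ k, IntegrableOn (uk k) A)
    (hconv : Tendsto (fun k => ∫ x in A, |uk k x - u x|) atTop (nhds 0))
    {g : Rn n → ℝ} (hgc : Continuous g) {C : ℝ} (hC0 : 0 ≤ C)
    (hgb : ∀ x, |g x| ≤ C) :
    Tendsto (fun k => ∫ x in A, uk k x * g x) atTop
      (nhds (∫ x in A, u x * g x)) := by
  have hgb' : ∃ C', ∀ x, |g x| ≤ C' := ⟨C, hgb⟩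
  have hiu : IntegrableOn (fun x => u x * g x) A :=
    integrableOn_mul_of_bounded hu hgc.aestronglyMeasurable hgb'
  have hiuk : ∀ k, IntegrableOn (fun x => uk k x * g x) A := fun k =>
    integrableOn_mul_of_bounded (huk k) hgc.aestronglyMeasurable hgb'
  rw [tendsto_iff_dist_tendsto_zero]
  refine squeeze_zero (fun k => dist_nonneg) (fun k => ?_)
    (by simpa using hconv.const_mul C)
  rw [Real.dist_eq, ← integral_sub (hiuk k) hiu]
  have hsub : IntegrableOn (fun x => uk k x - u x) A := (huk k).sub hu
  calc |∫ x in A, (uk k x * g x - u x * g x)|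
      ≤ ∫ x in A, |uk k x * g x - u x * g x| := by
        have := norm_integral_le_integral_norm (μ := volume.restrict A)
          (fun x => uk k x * g x - u x * g x)
        simpa only [Real.norm_eq_abs] using this
  _ ≤ ∫ x in A, C * |uk k x - u x| := by
      refine setIntegral_mono_on ?_ (hsub.abs.const_mul C) hAm fun x _ => ?_
      · have : (fun x => |uk k x * g x - u x * g x|)
            = fun x => |(uk k x - u x) * g x| := by
          funext x; ring_nf
        rw [this]
        exact (integrableOn_mul_of_bounded hsub hgc.aestronglyMeasurable hgb').abs
      · calc |uk k x * g x - u x * g x| = |uk k x - u x| * |g x| := by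
              rw [← abs_mul]; ring_nf
        _ ≤ |uk k x - u x| * C := mul_le_mul_of_nonneg_left (hgb x) (abs_nonneg _)
        _ = C * |uk k x - u x| := mul_comm _ _
  _ = C * ∫ x in A, |uk k x - u x| := integral_const_mul C _

end MGC
end Helpers7
theorem minG_compactness {n : ℕ} (Φ : Rn1 n → ℝ) (hΦ : IsNorm1 Φ)
    (Ω : Set (Rn n)) (hΩ : IsOpen Ω) (uk : ℕ → Rn n → ℝ)
    (huk : ∀ k, MinG Φ Ω (uk k)) (u : Rn n → ℝ)
    (hu : ∀ A, CpCtd A Ω → IntegrableOn u A)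
    (hconv : ∀ A, CpCtd A Ω →
      Tendsto (fun k => ∫ x in A, |uk k x - u x|) atTop (nhds 0)) :
    BVlocFun Ω u ∧ MinG Φ Ω u := by
  classical
  obtain ⟨c, hc0, hcl⟩ := hΦ.2.2
  -- Part 1 : u ∈ BV_loc
  have hBV : BVlocFun Ω u := by
    refine ⟨hu, ?_⟩
    intro A hA
    obtain ⟨A', hA', hAA'⟩ := MGC.exists_intermediate hA hΩ
    obtain ⟨ζ, hζ, hζc, hζU, hζ01, V, hV, hKV, hζV⟩ :=
      MGC.exists_cutoff hA.2.1 hA'.1 hAA'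
    obtain ⟨L, hL0, hL⟩ := MGC.fderiv_bound hζ hζc
    obtain ⟨B, hB⟩ := (hconv A' hA').bddAbove_range
    set Iu : ℝ := ∫ x in A', |u x| with hIu
    set G0 : ℝ := Gfun Φ (fun _ => 0) A' with hG0
    set Cn : ℝ := MGC.Cup Φ with hCn
    have hCn0 : 0 < Cn := MGC.Cup_pos hΦ
    set D : ℝ := G0 + (1/c) * (L * (B + Iu)) with hD
    refine ⟨Cn * D, ?_⟩
    rintro r ⟨η', ⟨he1, he2, he3, he4⟩, rfl⟩
    -- the associated pair field
    set η : Rn n → Rn1 n := fun x => ((Cn⁻¹ • η' x : Rn n), (0:ℝ)) with hη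
    have hη1 : ContDiff ℝ 1 η := (he1.const_smul Cn⁻¹).prodMk contDiff_const
    have hη2 : HasCompactSupport η := by
      refine HasCompactSupport.mono' he2 ?_
      intro x hx
      refine subset_closure (fun h0 => hx ?_)
      show ((Cn⁻¹ • η' x : Rn n), (0:ℝ)) = 0
      rw [h0]
      simp
    have hηsup : tsupport η ⊆ tsupport η' := by
      refine closure_minimal (fun x hx => subset_closure ?_) (isClosed_tsupport η')
      intro h0
      exact hx (by show ((Cn⁻¹ • η' x : Rn n), (0:ℝ)) = 0; rw [h0]; simp)
    have hη3 : tsupport η ⊆ V := fun x hx => hKV (subset_closure (he3 (hηsup hx)))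
    have hη3' : tsupport η ⊆ A' := fun x hx => hAA' (subset_closure (he3 (hηsup hx)))
    have hη4 : ∀ x, Φ (η x) ≤ 1 := by
      intro x
      have hpair : η x = Cn⁻¹ • ((η' x : Rn n), (0:ℝ)) := by
        refine Prod.ext rfl ?_
        show (0:ℝ) = Cn⁻¹ • (0:ℝ)
        simp
      rw [hpair, hΦ.2.1, abs_of_nonneg (by positivity)]
      have hle := MGC.Phi_fst_le hΦ (η' x) (he4 x)
      calc Cn⁻¹ * Φ ((η' x : Rn n), (0:ℝ)) ≤ Cn⁻¹ * (Cn - 1) := by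
            refine mul_le_mul_of_nonneg_left ?_ (by positivity)
            exact hle
      _ ≤ Cn⁻¹ * Cn := mul_le_mul_of_nonneg_left (by linarith) (by positivity)
      _ = 1 := inv_mul_cancel₀ (ne_of_gt hCn0)
    -- apply the key estimate for every k
    have hkey : ∀ k, Cn⁻¹ * (∫ x in A', uk k x * divN η' x) ≤ D := by
      intro k
      have hk := MGC.key hΦ hc0 hcl (huk k) MGC.bvloc_zero hA' hζ hζc hζU hζ01
        hV hζV hη1 hη2 hη3 hη3' hη4
      have hukA' : IntegrableOn (uk k) A' := (huk k).1.1 A' hA'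
      -- simplify LHS
      have hLHS : (∫ x in A', (uk k x * divN (fun y => (η y).1) x + (η x).2))
          = Cn⁻¹ * ∫ x in A', uk k x * divN η' x := by
        have hpt : ∀ x, uk k x * divN (fun y => (η y).1) x + (η x).2
            = Cn⁻¹ * (uk k x * divN η' x) := by
          intro x
          show uk k x * divN (fun y => Cn⁻¹ • η' y) x + 0 = _
          rw [MGC.divN_const_smul he1 Cn⁻¹ x]
          ring
        rw [integral_congr_ae (ae_of_all _ hpt), integral_const_mul]
      -- bound RHS error
      have hRHS : (∫ x in A', |uk k x - (fun _ => (0:ℝ)) x| * ‖fderiv ℝ ζ x‖)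
          ≤ L * (B + Iu) := by
        have hiuk : IntegrableOn (fun x => |uk k x|) A' := hukA'.abs
        have hiu' : IntegrableOn (fun x => |u x|) A' := (hu A' hA').abs
        have hidk : IntegrableOn (fun x => |uk k x - u x|) A' :=
          (hukA'.sub (hu A' hA')).abs
        have h1 : (∫ x in A', |uk k x - (fun _ => (0:ℝ)) x| * ‖fderiv ℝ ζ x‖)
            ≤ ∫ x in A', |uk k x| * L := by
          refine setIntegral_mono_on ?_ (hiuk.mul_const L) hA'.1.measurableSet
            fun x _ => ?_
          · refine MGC.integrableOn_mul_of_bounded (u := fun x => |uk k x - 0|) ?_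
              ((hζ.continuous_fderiv one_ne_zero).norm.aestronglyMeasurable)
              ⟨L, fun x => by rw [abs_of_nonneg (norm_nonneg _)]; exact hL x⟩
            simpa using hiuk
          · simp only [sub_zero]
            exact mul_le_mul_of_nonneg_left (hL x) (abs_nonneg _)
        have h2 : (∫ x in A', |uk k x| * L) = L * ∫ x in A', |uk k x| := by
          rw [integral_mul_const]; ring
        have h3 : (∫ x in A', |uk k x|)
            ≤ (∫ x in A', |uk k x - u x|) + ∫ x in A', |u x| := by
          rw [← integral_add hidk hiu']
          refine setIntegral_mono_on hiuk (hidk.add hiu') hA'.1.measurableSet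
            fun x _ => ?_
          calc |uk k x| = |(uk k x - u x) + u x| := by ring_nf
          _ ≤ |uk k x - u x| + |u x| := abs_add_le _ _
        have h4 : (∫ x in A', |uk k x - u x|) ≤ B :=
          hB (Set.mem_range_self k)
        calc (∫ x in A', |uk k x - (fun _ => (0:ℝ)) x| * ‖fderiv ℝ ζ x‖)
            ≤ L * ∫ x in A', |uk k x| := by rw [← h2]; exact h1
        _ ≤ L * (B + Iu) := by
            refine mul_le_mul_of_nonneg_left ?_ hL0
            exact le_trans h3 (by rw [hIu]; linarith)
      rw [hLHS] at hk
      refine le_trans hk ?_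
      rw [hD]
      have := mul_le_mul_of_nonneg_left hRHS (by positivity : (0:ℝ) ≤ 1/c)
      linarith
    -- shrink the integral to A
    have hshrink : ∀ k, (∫ x in A', uk k x * divN η' x)
        = ∫ x in A, uk k x * divN η' x := by
      intro k
      refine MGC.setIntegral_shrink hA.1.measurableSet hA'.1.measurableSet
        (subset_closure.trans hAA') ?_ ?_
      · refine MGC.integrableOn_mul_divN ((huk k).1.1 A' hA') he1 he2
      · intro x hx
        rw [MGC.divN_zero_of_notMem_tsupport (fun hts => hx (he3 hts))]
        ring
    -- pass to the limit
    obtain ⟨Cd, hCd0, hCd⟩ := MGC.divN_bound he1 he2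
    have hlim : Tendsto (fun k => ∫ x in A, uk k x * divN η' x) atTop
        (nhds (∫ x in A, u x * divN η' x)) :=
      MGC.tendsto_integral_mul_div hA.1.measurableSet (hu A hA)
        (fun k => (huk k).1.1 A hA) (hconv A hA) (MGC.divN_continuous he1)
        hCd0 hCd
    have hbd : ∀ k, (∫ x in A, uk k x * divN η' x) ≤ Cn * D := by
      intro k
      have := hkey k
      rw [hshrink k] at this
      calc (∫ x in A, uk k x * divN η' x)
          = Cn * (Cn⁻¹ * (∫ x in A, uk k x * divN η' x)) := by
            field_simp
      _ ≤ Cn * D := mul_le_mul_of_nonneg_left this hCn0.le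
    exact le_of_tendsto_of_tendsto' hlim tendsto_const_nhds hbd
  -- Part 2 : minimality of the limit
  refine ⟨hBV, hBV, ?_⟩
  intro A hA v hv hcs
  refine csSup_le ⟨0, MGC.zero_mem_Gset hΦ⟩ ?_
  rintro r ⟨η, h1, h2, h3, h4, rfl⟩
  have hK : IsCompact (tsupport η ∪ tsupport (fun x => u x - v x)) :=
    h2.union hcs.1
  have hKA : (tsupport η ∪ tsupport (fun x => u x - v x)) ⊆ A :=
    Set.union_subset h3 hcs.2
  obtain ⟨ζ, hζ, hζc, hζA, hζ01, V, hV, hKV, hζV⟩ := MGC.exists_cutoff hK hA.1 hKA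
  obtain ⟨L, hL0, hL⟩ := MGC.fderiv_bound hζ hζc
  have hη3 : tsupport η ⊆ V := fun x hx => hKV (Or.inl hx)
  have hDζV : ∀ x ∈ V, fderiv ℝ ζ x = 0 := by
    intro x hxV
    have hev : ζ =ᶠ[nhds x] (fun _ => (1:ℝ)) :=
      Filter.eventually_of_mem (hV.mem_nhds hxV) hζV
    rw [hev.fderiv_eq, fderiv_fun_const]
    rfl
  have hukA : ∀ k, IntegrableOn (uk k) A := fun k => (huk k).1.1 A hA
  have hvA : IntegrableOn v A := hv.1 A hA
  have huA : IntegrableOn u A := hu A hA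
  -- per-k bound from the key lemma
  have hper : ∀ k, (∫ x in A, (uk k x * divN (fun y => (η y).1) x + (η x).2))
      ≤ Gfun Φ v A + (1/c) * (L * ∫ x in A, |uk k x - u x|) := by
    intro k
    have hk := MGC.key hΦ hc0 hcl (huk k) hv hA hζ hζc hζA hζ01 hV hζV
      h1 h2 hη3 h3 h4
    refine le_trans hk ?_
    have herr : (∫ x in A, |uk k x - v x| * ‖fderiv ℝ ζ x‖)
        ≤ ∫ x in A, |uk k x - u x| * L := by
      have hiL : IntegrableOn (fun x => |uk k x - v x| * ‖fderiv ℝ ζ x‖) A := by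
        refine MGC.integrableOn_mul_of_bounded ((hukA k).sub hvA).abs
          ((hζ.continuous_fderiv one_ne_zero).norm.aestronglyMeasurable)
          ⟨L, fun x => by rw [abs_of_nonneg (norm_nonneg _)]; exact hL x⟩
      refine setIntegral_mono_on hiL (((hukA k).sub huA).abs.mul_const L)
        hA.1.measurableSet fun x _ => ?_
      by_cases hxV : x ∈ V
      · rw [hDζV x hxV]
        simp only [norm_zero, mul_zero]
        positivity
      · have hx0 : u x - v x = 0 := by
          by_contra hne
          exact hxV (hKV (Or.inr (subset_closure hne)))
        have : uk k x - v x = uk k x - u x := by linarith [hx0]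
        rw [this]
        exact mul_le_mul_of_nonneg_left (hL x) (abs_nonneg _)
    have herr2 : (∫ x in A, |uk k x - u x| * L) = L * ∫ x in A, |uk k x - u x| := by
      rw [integral_mul_const]; ring
    rw [herr2] at herr
    have := mul_le_mul_of_nonneg_left herr (by positivity : (0:ℝ) ≤ 1/c)
    linarith
  -- limit of the left-hand side
  obtain ⟨Cd, hCd0, hCd⟩ := MGC.divN_bound (MGC.fst_contDiff h1)
    (MGC.fst_hasCompactSupport h2)
  have hsndint : IntegrableOn (fun x => (η x).2) A := by
    exact (MGC.integrable_integrand hA huA h1 h2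
      ⟨1/c, fun x => MGC.test_snd_abs_le hc0 hcl h4 x⟩).2.2
  have hlim1 : Tendsto (fun k => ∫ x in A, uk k x * divN (fun y => (η y).1) x)
      atTop (nhds (∫ x in A, u x * divN (fun y => (η y).1) x)) :=
    MGC.tendsto_integral_mul_div hA.1.measurableSet huA hukA (hconv A hA)
      (MGC.divN_continuous (MGC.fst_contDiff h1)) hCd0 hCd
  have hsplitk : ∀ w : Rn n → ℝ, IntegrableOn w A →
      (∫ x in A, (w x * divN (fun y => (η y).1) x + (η x).2))
      = (∫ x in A, w x * divN (fun y => (η y).1) x) + ∫ x in A, (η x).2 := by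
    intro w hw
    exact integral_add (MGC.integrableOn_mul_divN hw (MGC.fst_contDiff h1)
      (MGC.fst_hasCompactSupport h2)) hsndint
  have hlim : Tendsto (fun k =>
      ∫ x in A, (uk k x * divN (fun y => (η y).1) x + (η x).2)) atTop
      (nhds (∫ x in A, (u x * divN (fun y => (η y).1) x + (η x).2))) := by
    have : (fun k => ∫ x in A, (uk k x * divN (fun y => (η y).1) x + (η x).2))
        = fun k => (∫ x in A, uk k x * divN (fun y => (η y).1) x)
          + ∫ x in A, (η x).2 := funext fun k => hsplitk (uk k) (hukA k)
    rw [this, hsplitk u huA]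
    exact hlim1.add tendsto_const_nhds
  have hlimR : Tendsto (fun k => Gfun Φ v A + (1/c) * (L * ∫ x in A, |uk k x - u x|))
      atTop (nhds (Gfun Φ v A)) := by
    have h0 : Tendsto (fun k => (1/c) * (L * ∫ x in A, |uk k x - u x|)) atTop
        (nhds 0) := by
      have := ((hconv A hA).const_mul L).const_mul (1/c)
      simpa using this
    have := tendsto_const_nhds (x := Gfun Φ v A) (f := atTop (α := ℕ)) |>.add h0
    simpa using this
  exact le_of_tendsto_of_tendsto' hlim hlimR hper
end

section
/- Let Φ be a norm on ℝ^{n+1}. The boundary of B_Φ is a generalized graph in the vertical direction if and only if the boundary of B_{Φ^o} is a generalized graph in the vertical direction; that is, Φ(ξ̂, ξ_{n+1}) ≥ Φ(ξ̂, 0) holds for all (ξ̂, ξ_{n+1}) ∈ ℝ^{n+1} if and only if Φ^o(ξ̂*, ξ*_{n+1}) ≥ Φ^o(ξ̂*, 0) holds for all (ξ̂*, ξ*_{n+1}) ∈ ℝ^{n+1}. -/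
open MeasureTheory Set Filter

open scoped RealInnerProductSpace

namespace GGaux

noncomputable def toE {n : ℕ} (x : Rn1 n) : WithLp 2 (Rn n × ℝ) :=
  (WithLp.equiv 2 (Rn n × ℝ)).symm x

lemma dotn_eq_inner {n : ℕ} (x y : Rn n) : dotn x y = (inner ℝ x y : ℝ) := by
  simp [dotn, PiLp.inner_apply, RCLike.inner_apply, mul_comm]

lemma dotp_eq_inner {n : ℕ} (x y : Rn1 n) : dotp x y = (inner ℝ (toE x) (toE y) : ℝ) := by
  simp [dotp, dotn_eq_inner, toE, WithLp.prod_inner_apply, RCLike.inner_apply, mul_comm]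

lemma enorm1_eq {n : ℕ} (x : Rn1 n) : enorm1 x = ‖toE x‖ := by
  rw [enorm1, dotp_eq_inner, real_inner_self_eq_norm_mul_norm,
    Real.sqrt_mul_self (norm_nonneg _)]

lemma enorm1_nonneg {n : ℕ} (x : Rn1 n) : 0 ≤ enorm1 x := Real.sqrt_nonneg _

lemma dotp_le {n : ℕ} (x y : Rn1 n) : dotp x y ≤ enorm1 x * enorm1 y := by
  rw [dotp_eq_inner, enorm1_eq, enorm1_eq]; exact real_inner_le_norm _ _

lemma sum_single {n : ℕ} (y : Rn n) :
    ∑ j, y j • EuclideanSpace.single j (1:ℝ) = y := by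
  have h := (EuclideanSpace.basisFun (Fin n) ℝ).sum_repr y
  simpa [EuclideanSpace.basisFun_repr, EuclideanSpace.basisFun_apply] using h

lemma apply_sum_single {n : ℕ} (c : Fin n → ℝ) (i : Fin n) :
    (∑ j, c j • EuclideanSpace.single j (1:ℝ)) i = c i := by
  have hy : ∀ j, ((WithLp.equiv 2 (Fin n → ℝ)).symm c) j = c j := fun j => rfl
  calc (∑ j, c j • EuclideanSpace.single j (1:ℝ)) i
      = (∑ j, ((WithLp.equiv 2 (Fin n → ℝ)).symm c) j • EuclideanSpace.single j (1:ℝ)) i := by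
        simp_rw [hy]
    _ = ((WithLp.equiv 2 (Fin n → ℝ)).symm c) i := by rw [sum_single]
    _ = c i := hy i

end GGaux

theorem generalized_graph_iff_dual {n : ℕ} (Φ : Rn1 n → ℝ) (hΦ : IsNorm1 Φ) :
    (∀ ξ : Rn1 n, Φ (ξ.1, (0:ℝ)) ≤ Φ ξ) ↔
      (∀ ξs : Rn1 n, dual1 Φ (ξs.1, (0:ℝ)) ≤ dual1 Φ ξs) := by
  obtain ⟨hconv, hhom, c, hc, hlow⟩ := hΦ
  have hΦ0 : Φ 0 = 0 := by
    have h := hhom 0 0; simpa using h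
  have hnn : ∀ ξ, 0 ≤ Φ ξ := fun ξ =>
    le_trans (mul_nonneg hc.le (GGaux.enorm1_nonneg _)) (hlow ξ)
  have h0B : (0 : Rn1 n) ∈ {ξ : Rn1 n | Φ ξ ≤ 1} := by
    simp [hΦ0]
  have hdotp0 : ∀ x : Rn1 n, dotp x 0 = 0 := fun x => by simp [dotp, dotn]
  have hne : ∀ x : Rn1 n, ((fun ξ => dotp x ξ) '' {ξ | Φ ξ ≤ 1}).Nonempty :=
    fun x => ⟨0, 0, h0B, hdotp0 x⟩
  have hbdd : ∀ x : Rn1 n, BddAbove ((fun ξ => dotp x ξ) '' {ξ | Φ ξ ≤ 1}) := by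
    intro x
    refine ⟨enorm1 x * c⁻¹, ?_⟩
    rintro r ⟨ξ, hξ, rfl⟩
    have h1 : enorm1 ξ ≤ c⁻¹ := by
      have h2 := hlow ξ
      have h3 : Φ ξ ≤ 1 := hξ
      have h4 : c * c⁻¹ = 1 := mul_inv_cancel₀ (ne_of_gt hc)
      nlinarith [GGaux.enorm1_nonneg ξ]
    calc dotp x ξ ≤ enorm1 x * enorm1 ξ := GGaux.dotp_le x ξ
      _ ≤ enorm1 x * c⁻¹ := mul_le_mul_of_nonneg_left h1 (GGaux.enorm1_nonneg x)
  constructor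
  · intro hmono xs
    rw [dual1, dual1]
    refine csSup_le (hne _) ?_
    rintro r ⟨ξ, hξ, rfl⟩
    refine le_csSup (hbdd xs) ?_
    refine ⟨((ξ.1, 0) : Rn1 n), ?_, ?_⟩
    · exact le_trans (hmono ξ) hξ
    · simp [dotp]
  · intro hdual ξ
    by_contra hcon
    push_neg at hcon
    have hb0 : 0 < Φ (ξ.1, 0) := lt_of_le_of_lt (hnn ξ) hcon
    set l : ℝ := (Φ ξ + Φ (ξ.1, 0)) / 2 with hl
    have hl0 : 0 < l := by rw [hl]; linarith [hnn ξ]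
    have hlinv : 0 < l⁻¹ := inv_pos.2 hl0
    -- the scaled point
    have hζlt : Φ (l⁻¹ • ξ) < 1 := by
      rw [hhom, abs_of_pos hlinv, inv_mul_eq_div, div_lt_one hl0]
      rw [hl]; linarith
    have hζB : l⁻¹ • ξ ∈ {ζ : Rn1 n | Φ ζ ≤ 1} := le_of_lt hζlt
    have hpgt : (1:ℝ) < Φ ((l⁻¹ • ξ.1, 0) : Rn1 n) := by
      have hpe : ((l⁻¹ • ξ.1, (0:ℝ)) : Rn1 n) = l⁻¹ • ((ξ.1, 0) : Rn1 n) := by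
        simp [Prod.smul_def]
      rw [hpe, hhom, abs_of_pos hlinv, inv_mul_eq_div, lt_div_iff₀ hl0, one_mul, hl]
      linarith
    have hpB : ((l⁻¹ • ξ.1, (0:ℝ)) : Rn1 n) ∉ {ζ : Rn1 n | Φ ζ ≤ 1} := by
      simp only [Set.mem_setOf_eq, not_le]
      exact hpgt
    have hcont : Continuous Φ := by
      have h := hconv.continuousOn isOpen_univ
      rw [← continuousOn_univ]
      exact h
    have hBclosed : IsClosed {ζ : Rn1 n | Φ ζ ≤ 1} :=
      isClosed_le hcont continuous_const
    have hBconv : Convex ℝ {ζ : Rn1 n | Φ ζ ≤ 1} := by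
      have h := hconv.convex_le 1
      simpa using h
    obtain ⟨f, u, hfB, hup⟩ := geometric_hahn_banach_closed_point hBconv hBclosed hpB
    set xh : Rn n :=
      ∑ j, (f (EuclideanSpace.single j (1:ℝ), (0:ℝ))) • EuclideanSpace.single j (1:ℝ) with hxh
    have hxhi : ∀ i, xh i = f (EuclideanSpace.single i (1:ℝ), (0:ℝ)) := by
      intro i
      rw [hxh]
      exact GGaux.apply_sum_single (fun j => f (EuclideanSpace.single j (1:ℝ), (0:ℝ))) i
    set s : ℝ := f ((0 : Rn n), (1:ℝ)) with hs
    have hrep : ∀ w : Rn1 n, dotp ((xh, s) : Rn1 n) w = f w := by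
      intro w
      have hsum : (∑ i, w.1 i • ((EuclideanSpace.single i (1:ℝ), (0:ℝ)) : Rn1 n))
          = ((w.1, 0) : Rn1 n) := by
        refine Prod.ext ?_ ?_
        · rw [Prod.fst_sum]; simpa using GGaux.sum_single w.1
        · rw [Prod.snd_sum]; simp
      have h1 : dotn xh w.1 = f ((w.1, 0) : Rn1 n) := by
        calc dotn xh w.1 = ∑ i, w.1 i * f (EuclideanSpace.single i (1:ℝ), (0:ℝ)) := by
              rw [dotn]; exact Finset.sum_congr rfl fun i _ => by rw [hxhi i]; ring
          _ = ∑ i, f (w.1 i • ((EuclideanSpace.single i (1:ℝ), (0:ℝ)) : Rn1 n)) := by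
              refine Finset.sum_congr rfl fun i _ => ?_
              rw [ContinuousLinearMap.map_smul]; simp
          _ = f (∑ i, w.1 i • ((EuclideanSpace.single i (1:ℝ), (0:ℝ)) : Rn1 n)) := by
              rw [map_sum]
          _ = f ((w.1, 0) : Rn1 n) := by rw [hsum]
      have h2 : ((w.1, (0:ℝ)) : Rn1 n) + (w.2 • (((0:Rn n), (1:ℝ)) : Rn1 n)) = w := by
        refine Prod.ext ?_ ?_ <;> simp
      calc dotp ((xh, s) : Rn1 n) w = dotn xh w.1 + s * w.2 := rfl
        _ = f ((w.1, 0) : Rn1 n) + f (w.2 • (((0:Rn n), (1:ℝ)) : Rn1 n)) := by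
            rw [h1, ContinuousLinearMap.map_smul, smul_eq_mul]; rw [hs]; ring
        _ = f w := by rw [← ContinuousLinearMap.map_add, h2]
    have hkey : dotp ((xh, (0:ℝ)) : Rn1 n) (l⁻¹ • ξ) = f ((l⁻¹ • ξ.1, (0:ℝ)) : Rn1 n) := by
      rw [← hrep ((l⁻¹ • ξ.1, (0:ℝ)) : Rn1 n)]
      simp [dotp]
    have h3 : dotp ((xh, (0:ℝ)) : Rn1 n) (l⁻¹ • ξ) ≤ dual1 Φ ((xh, (0:ℝ)) : Rn1 n) := by
      rw [dual1]
      exact le_csSup (hbdd _) ⟨l⁻¹ • ξ, hζB, rfl⟩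
    have h4 : dual1 Φ ((xh, (0:ℝ)) : Rn1 n) ≤ dual1 Φ ((xh, s) : Rn1 n) := by
      have h := hdual ((xh, s) : Rn1 n)
      simpa using h
    have h5 : dual1 Φ ((xh, s) : Rn1 n) ≤ u := by
      rw [dual1]
      refine csSup_le (hne _) ?_
      rintro r ⟨a, haB, rfl⟩
      show dotp ((xh, s) : Rn1 n) a ≤ u
      rw [hrep a]
      exact (hfB a haB).le
    have h6 : u < f ((l⁻¹ • ξ.1, (0:ℝ)) : Rn1 n) := hup
    rw [← hkey] at h6
    linarith
end

section
/- Let Φ be a norm on ℝ^{n+1} and let φ(ξ̂) = Φ(ξ̂, 0) be its restriction to the horizontal hyperplane. Then φ^o(ξ̂*) = Φ^o(ξ̂*, 0) for all ξ̂* ∈ ℝ^n if and only if the boundary of B_Φ is a generalized graph in the vertical direction, i.e. Φ(ξ̂, ξ_{n+1}) ≥ Φ(ξ̂, 0) for all (ξ̂, ξ_{n+1}) ∈ ℝ^{n+1}. -/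
open MeasureTheory Set Filter

section AuxProofs

variable {n : ℕ}

lemma auxPhi_zero (Φ : Rn1 n → ℝ) (hΦ : IsNorm1 Φ) : Φ 0 = 0 := by
  have h := hΦ.2.1 0 0
  simpa using h

lemma auxPhi_nonneg (Φ : Rn1 n → ℝ) (hΦ : IsNorm1 Φ) (x : Rn1 n) : 0 ≤ Φ x := by
  obtain ⟨c, hc, hcle⟩ := hΦ.2.2
  have h1 : 0 ≤ enorm1 x := Real.sqrt_nonneg _
  have := hcle x
  nlinarith

lemma auxPhi_sub (Φ : Rn1 n → ℝ) (hΦ : IsNorm1 Φ) (x y : Rn1 n) :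
    Φ (x + y) ≤ Φ x + Φ y := by
  have h := hΦ.1.2 (Set.mem_univ x) (Set.mem_univ y)
    (by norm_num : (0:ℝ) ≤ 1/2) (by norm_num : (0:ℝ) ≤ 1/2) (by norm_num)
  have h2 := hΦ.2.1 (2:ℝ) ((1/2:ℝ) • x + (1/2:ℝ) • y)
  have hx : (2:ℝ) • ((1/2:ℝ) • x + (1/2:ℝ) • y) = x + y := by
    rw [smul_add, smul_smul, smul_smul]; norm_num
  rw [hx, abs_of_pos (by norm_num : (0:ℝ) < 2)] at h2
  rw [h2]
  simp only [smul_eq_mul] at h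
  linarith

lemma dotn_eq_inner (x y : Rn n) : dotn x y = inner ℝ x y := by
  rw [PiLp.inner_apply]
  simp [dotn, RCLike.inner_apply, mul_comm]

lemma dotn_self (x : Rn n) : dotn x x = ‖x‖ ^ 2 := by
  rw [dotn_eq_inner]
  exact real_inner_self_eq_norm_sq x

lemma dotn_le (x y : Rn n) : dotn x y ≤ ‖x‖ * ‖y‖ := by
  rw [dotn_eq_inner]; exact real_inner_le_norm x y

lemma norm_fst_le_enorm1 (ξ : Rn1 n) : ‖ξ.1‖ ≤ enorm1 ξ := by
  unfold enorm1 dotp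
  rw [dotn_self]
  calc ‖ξ.1‖ = Real.sqrt (‖ξ.1‖ ^ 2) := by
        rw [Real.sqrt_sq (norm_nonneg _)]
    _ ≤ _ := Real.sqrt_le_sqrt (by nlinarith)

end AuxProofs

theorem dual_restriction_eq_iff_generalized_graph {n : ℕ} (Φ : Rn1 n → ℝ)
    (hΦ : IsNorm1 Φ) :
    (∀ xs : Rn n, dualN (fun ξh : Rn n => Φ (ξh, (0:ℝ))) xs = dual1 Φ (xs, (0:ℝ))) ↔
      (∀ ξ : Rn1 n, Φ (ξ.1, (0:ℝ)) ≤ Φ ξ) := by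
  obtain ⟨c, hc, hcle⟩ := hΦ.2.2
  constructor
  · -- forward direction
    intro h
    by_contra hcon
    push_neg at hcon
    obtain ⟨ξ, hξ⟩ := hcon
    set a := ξ.1 with ha_def
    have hφ_nonneg : ∀ x : Rn n, 0 ≤ Φ (x, (0:ℝ)) := fun x => auxPhi_nonneg Φ hΦ _
    have hφ_hom : ∀ (r : ℝ) (x : Rn n), Φ ((r • x : Rn n), (0:ℝ)) = |r| * Φ (x, (0:ℝ)) := by
      intro r x
      have he : ((r • x : Rn n), (0:ℝ)) = r • ((x, (0:ℝ)) : Rn1 n) := by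
        simp [Prod.smul_def]
      rw [he, hΦ.2.1]
    have hφ_add : ∀ x y : Rn n, Φ ((x + y : Rn n), (0:ℝ)) ≤ Φ (x, (0:ℝ)) + Φ (y, (0:ℝ)) := by
      intro x y
      have he : ((x + y : Rn n), (0:ℝ)) = ((x, (0:ℝ)) : Rn1 n) + (y, (0:ℝ)) := by
        simp [Prod.ext_iff]
      rw [he]
      exact auxPhi_sub Φ hΦ _ _
    have hfa_pos : 0 < Φ (a, (0:ℝ)) := lt_of_le_of_lt (auxPhi_nonneg Φ hΦ ξ) hξ
    have ha : a ≠ 0 := by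
      intro h0
      rw [h0] at hfa_pos
      have : ((0 : Rn n), (0:ℝ)) = (0 : Rn1 n) := rfl
      rw [this, auxPhi_zero Φ hΦ] at hfa_pos
      exact lt_irrefl _ hfa_pos
    -- Hahn–Banach: a linear functional g ≤ φ with g a = φ a
    obtain ⟨g, hg1, hg2⟩ := exists_extension_of_le_sublinear
      (LinearPMap.mkSpanSingleton' a (Φ (a, (0:ℝ)))
        (fun r hr => by
          rcases smul_eq_zero.mp hr with h' | h'
          · simp [h']
          · exact absurd h' ha))
      (fun x => Φ (x, (0:ℝ)))
      (fun r hr x => by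
        show Φ ((r • x : Rn n), (0:ℝ)) = r * Φ (x, (0:ℝ))
        rw [hφ_hom, abs_of_pos hr])
      hφ_add
      (by
        rintro ⟨v, hv⟩
        obtain ⟨r, rfl⟩ := Submodule.mem_span_singleton.mp hv
        rw [LinearPMap.mkSpanSingleton'_apply, smul_eq_mul]
        show r * Φ (a, (0:ℝ)) ≤ Φ ((r • a : Rn n), (0:ℝ))
        rw [hφ_hom]
        exact mul_le_mul_of_nonneg_right (le_abs_self r) (hφ_nonneg a))
    have hga : g a = Φ (a, (0:ℝ)) := by
      have h1 := hg1 ⟨a, Submodule.mem_span_singleton_self a⟩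
      exact h1.trans (LinearPMap.mkSpanSingleton'_apply_self _ _ _ _)
    -- represent g by a vector xs
    set b := PiLp.basisFun 2 ℝ (Fin n) with hb_def
    set xs : Rn n := (WithLp.equiv 2 (Fin n → ℝ)).symm (fun i => g (b i)) with hxs_def
    have hxs_i : ∀ i, xs i = g (b i) := fun i => rfl
    have hdot : ∀ y : Rn n, dotn xs y = g y := by
      intro y
      conv_rhs => rw [← b.sum_repr y]
      rw [map_sum]
      unfold dotn
      refine Finset.sum_congr rfl fun i _ => ?_
      rw [g.map_smul, smul_eq_mul, hxs_i]
      have : b.repr y i = y i := rfl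
      rw [this]; ring
    -- the sup defining dualN at xs is at most 1
    have hdualN_le : dualN (fun ξh : Rn n => Φ (ξh, (0:ℝ))) xs ≤ 1 := by
      apply csSup_le
      · refine ⟨0, ⟨0, ?_, ?_⟩⟩
        · show Φ ((0:Rn n), (0:ℝ)) ≤ 1
          have : ((0 : Rn n), (0:ℝ)) = (0 : Rn1 n) := rfl
          rw [this, auxPhi_zero Φ hΦ]; norm_num
        · simp [dotn]
      · rintro r ⟨y, hy, rfl⟩
        calc dotn xs y = g y := hdot y
          _ ≤ Φ (y, (0:ℝ)) := hg2 y
          _ ≤ 1 := hy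
    -- but the sup defining dual1 at (xs,0) exceeds 1
    have hbdd : BddAbove ((fun ζ => dotp (xs, (0:ℝ)) ζ) '' {ζ | Φ ζ ≤ 1}) := by
      refine ⟨‖xs‖ * (1 / c), ?_⟩
      rintro r ⟨ζ, hζ, rfl⟩
      show dotp (xs, (0:ℝ)) ζ ≤ ‖xs‖ * (1 / c)
      have h1 : dotp (xs, (0:ℝ)) ζ = dotn xs ζ.1 := by simp [dotp]
      rw [h1]
      have h2 : dotn xs ζ.1 ≤ ‖xs‖ * ‖ζ.1‖ := dotn_le _ _
      have h3 : ‖ζ.1‖ ≤ enorm1 ζ := norm_fst_le_enorm1 ζ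
      have h4 : c * enorm1 ζ ≤ Φ ζ := hcle ζ
      have hζ' : Φ ζ ≤ 1 := hζ
      have h5 : enorm1 ζ ≤ 1 / c := by
        rw [le_div_iff₀ hc]; nlinarith
      have h6 : ‖ζ.1‖ ≤ 1 / c := le_trans h3 h5
      calc dotn xs ζ.1 ≤ ‖xs‖ * ‖ζ.1‖ := h2
        _ ≤ ‖xs‖ * (1 / c) := mul_le_mul_of_nonneg_left h6 (norm_nonneg _)
    have hΦξ_pos : 0 ≤ Φ ξ := auxPhi_nonneg Φ hΦ ξ
    -- Φ ξ could be 0; then scaled elements blow up, still a contradiction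
    have hmem : ∀ t : ℝ, 0 < t → t * Φ ξ ≤ 1 →
        t * g a ≤ dual1 Φ (xs, (0:ℝ)) := by
      intro t ht htle
      have hmem' : (t • ξ : Rn1 n) ∈ {ζ | Φ ζ ≤ 1} := by
        show Φ (t • ξ) ≤ 1
        rw [hΦ.2.1, abs_of_pos ht]; exact htle
      have : dotp (xs, (0:ℝ)) (t • ξ) ∈
          (fun ζ => dotp (xs, (0:ℝ)) ζ) '' {ζ | Φ ζ ≤ 1} :=
        Set.mem_image_of_mem _ hmem'
      have hle := le_csSup hbdd this
      have heq : dotp (xs, (0:ℝ)) (t • ξ) = t * g a := by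
        have : (t • ξ).1 = t • a := rfl
        simp only [dotp, this, Prod.smul_snd, smul_eq_mul, zero_mul, add_zero]
        rw [hdot, g.map_smul, smul_eq_mul]
      rw [heq] at hle
      exact hle
    have hkey := h xs
    rw [hkey] at hdualN_le
    -- choose t appropriately
    rcases eq_or_lt_of_le hΦξ_pos with h0 | hpos
    · -- Φ ξ = 0 : arbitrarily large elements
      have hga_pos : 0 < g a := by rw [hga]; exact hfa_pos
      have h2 := hmem (2 / g a) (by positivity) (by rw [← h0]; ring_nf; positivity)
      have : (2 / g a) * g a = 2 := by field_simp
      rw [this] at h2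
      linarith
    · have h2 := hmem (Φ ξ)⁻¹ (by positivity) (by rw [inv_mul_cancel₀ (ne_of_gt hpos)])
      rw [hga] at h2
      have h3 : (1:ℝ) < (Φ ξ)⁻¹ * Φ (a, (0:ℝ)) := by
        rw [← inv_mul_cancel₀ (ne_of_gt hpos)]
        exact mul_lt_mul_of_pos_left hξ (by positivity)
      linarith
  · -- backward direction: the two defining sets coincide
    intro h xs
    unfold dualN dual1
    congr 1
    ext r
    constructor
    · rintro ⟨y, hy, rfl⟩
      refine ⟨((y, (0:ℝ)) : Rn1 n), hy, ?_⟩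
      simp [dotp]
    · rintro ⟨ζ, hζ, rfl⟩
      refine ⟨ζ.1, le_trans (h ζ) hζ, ?_⟩
      simp [dotp]
end

section
/- A norm Φ on ℝ^{n+1} is partially monotone if and only if there exists a positively one-homogeneous convex function ω : [0,∞) × [0,∞) → [0,∞) satisfying ω(1,0) > 0, ω(0,1) > 0, and ω(s_1,s_2) ≤ ω(t_1,t_2) whenever 0 ≤ s_i ≤ t_i for i = 1,2, such that Φ(ξ̂, ξ_{n+1}) = ω(φ(ξ̂), |ξ_{n+1}|) for all (ξ̂, ξ_{n+1}) ∈ ℝ^{n+1}, where φ(ξ̂) = Φ(ξ̂, 0). -/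
open MeasureTheory Set Filter

section AuxPM

variable {n : ℕ} {Φ : Rn1 n → ℝ}

theorem Phi_nonneg' (hΦ : IsNorm1 Φ) (ξ : Rn1 n) : 0 ≤ Φ ξ := by
  obtain ⟨-, -, c, hc, hlb⟩ := hΦ
  have h := hlb ξ
  have h2 : (0:ℝ) ≤ c * enorm1 ξ := by
    unfold enorm1; positivity
  linarith

theorem Phi_0t' (hΦ : IsNorm1 Φ) (t : ℝ) :
    Φ ((0:Rn n), t) = |t| * Φ ((0:Rn n), (1:ℝ)) := by
  have h := hΦ.2.1 t ((0:Rn n), (1:ℝ))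
  rw [Prod.smul_mk, smul_zero, smul_eq_mul, mul_one] at h
  exact h

theorem Phi_sv0' (hΦ : IsNorm1 Φ) (v : Rn n) (s : ℝ) :
    Φ (s • v, (0:ℝ)) = |s| * Φ (v, (0:ℝ)) := by
  have h := hΦ.2.1 s (v, (0:ℝ))
  rw [Prod.smul_mk, smul_zero] at h
  exact h

theorem Phi_01_pos' (hΦ : IsNorm1 Φ) : 0 < Φ ((0:Rn n), (1:ℝ)) := by
  obtain ⟨-, -, c, hc, hlb⟩ := hΦ
  have h := hlb ((0:Rn n), (1:ℝ))
  have he : enorm1 ((0:Rn n), (1:ℝ)) = 1 := by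
    simp [enorm1, dotp, dotn]
  rw [he, mul_one] at h
  linarith

theorem Phi_abs2' (hΦ : IsNorm1 Φ) (t : ℝ) :
    Φ ((0:Rn n), |t|) = Φ ((0:Rn n), t) := by
  rw [Phi_0t' hΦ |t|, Phi_0t' hΦ t, abs_abs]

theorem aux_omega (hΦ : IsNorm1 Φ) (hPM : PartMono Φ)
    (v : Rn n) (hv1 : Φ (v, (0:ℝ)) ≤ 1)
    (hrepv : ∀ x : Rn n, Φ (x, (0:ℝ)) = Φ (x, (0:ℝ)) * Φ (v, (0:ℝ))) :
    ∃ ω : ℝ → ℝ → ℝ,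
      (∀ s t : ℝ, 0 ≤ s → 0 ≤ t → 0 ≤ ω s t) ∧
      (∀ l s t : ℝ, 0 < l → 0 ≤ s → 0 ≤ t → ω (l * s) (l * t) = l * ω s t) ∧
      ConvexOn ℝ {p : ℝ × ℝ | 0 ≤ p.1 ∧ 0 ≤ p.2} (fun p : ℝ × ℝ => ω p.1 p.2) ∧
      0 < ω 1 0 ∧ 0 < ω 0 1 ∧
      (∀ s₁ s₂ t₁ t₂ : ℝ, 0 ≤ s₁ → s₁ ≤ t₁ → 0 ≤ s₂ → s₂ ≤ t₂ → ω s₁ s₂ ≤ ω t₁ t₂) ∧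
      (∀ ξ : Rn1 n, Φ ξ = ω (Φ (ξ.1, (0:ℝ))) |ξ.2|) := by
  have hconv := hΦ.1
  have ha0 : 0 ≤ Φ (v, (0:ℝ)) := Phi_nonneg' hΦ _
  refine ⟨fun s t => Φ (s • v, t) + (1 - Φ (v, (0:ℝ))) * s, ?_, ?_, ?_, ?_, ?_, ?_, ?_⟩
  · intro s t hs ht
    have h1 := Phi_nonneg' hΦ (s • v, t)
    have h2 : (0:ℝ) ≤ (1 - Φ (v, (0:ℝ))) * s :=
      mul_nonneg (by linarith) hs
    show (0:ℝ) ≤ Φ (s • v, t) + (1 - Φ (v, (0:ℝ))) * s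
    linarith
  · intro l s t hl hs ht
    have h1 : ((l * s) • v, l * t) = l • ((s • v, t) : Rn1 n) := by
      rw [Prod.smul_mk, mul_smul, smul_eq_mul]
    show Φ ((l * s) • v, l * t) + (1 - Φ (v, (0:ℝ))) * (l * s)
      = l * (Φ (s • v, t) + (1 - Φ (v, (0:ℝ))) * s)
    rw [h1, hΦ.2.1, abs_of_pos hl]
    ring
  · constructor
    · intro p hp q hq α β hα hβ hαβ
      simp only [Set.mem_setOf_eq] at *
      constructor
      · simp only [Prod.fst_add, Prod.smul_fst, smul_eq_mul]
        nlinarith [hp.1, hq.1]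
      · simp only [Prod.snd_add, Prod.smul_snd, smul_eq_mul]
        nlinarith [hp.2, hq.2]
    · intro p hp q hq α β hα hβ hαβ
      have key : ((α • p + β • q).1 • v, (α • p + β • q).2)
          = α • ((p.1 • v, p.2) : Rn1 n) + β • ((q.1 • v, q.2) : Rn1 n) := by
        rw [Prod.smul_mk, Prod.smul_mk, Prod.mk_add_mk]
        refine Prod.ext ?_ ?_
        · simp only [Prod.fst_add, Prod.smul_fst, smul_eq_mul, add_smul, mul_smul]
        · simp only [Prod.snd_add, Prod.smul_snd, smul_eq_mul]
      have h2 := hconv.2 (Set.mem_univ ((p.1 • v, p.2) : Rn1 n))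
        (Set.mem_univ ((q.1 • v, q.2) : Rn1 n)) hα hβ hαβ
      simp only [smul_eq_mul] at h2
      show Φ ((α • p + β • q).1 • v, (α • p + β • q).2)
          + (1 - Φ (v, (0:ℝ))) * (α • p + β • q).1
        ≤ α • (Φ (p.1 • v, p.2) + (1 - Φ (v, (0:ℝ))) * p.1)
          + β • (Φ (q.1 • v, q.2) + (1 - Φ (v, (0:ℝ))) * q.1)
      have hf1 : (α • p + β • q).1 = α * p.1 + β * q.1 := by
        simp [Prod.fst_add, Prod.smul_fst, smul_eq_mul]
      rw [key, hf1]
      simp only [smul_eq_mul]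
      nlinarith [h2]
  · show (0:ℝ) < Φ ((1:ℝ) • v, (0:ℝ)) + (1 - Φ (v, (0:ℝ))) * 1
    rw [one_smul, mul_one]
    linarith
  · show (0:ℝ) < Φ ((0:ℝ) • v, (1:ℝ)) + (1 - Φ (v, (0:ℝ))) * 0
    rw [zero_smul, mul_zero, add_zero]
    exact Phi_01_pos' hΦ
  · intro s₁ s₂ t₁ t₂ h1 h2 h3 h4
    have c1 : Φ (s₁ • v, (0:ℝ)) ≤ Φ (t₁ • v, (0:ℝ)) := by
      rw [Phi_sv0' hΦ v s₁, Phi_sv0' hΦ v t₁, abs_of_nonneg h1,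
        abs_of_nonneg (h1.trans h2)]
      exact mul_le_mul_of_nonneg_right h2 ha0
    have c2 : Φ ((0:Rn n), s₂) ≤ Φ ((0:Rn n), t₂) := by
      rw [Phi_0t' hΦ s₂, Phi_0t' hΦ t₂, abs_of_nonneg h3, abs_of_nonneg (h3.trans h4)]
      exact mul_le_mul_of_nonneg_right h4 (Phi_nonneg' hΦ _)
    have key := hPM (s₁ • v, s₂) (t₁ • v, t₂) c1 c2
    have h5 : (1 - Φ (v, (0:ℝ))) * s₁ ≤ (1 - Φ (v, (0:ℝ))) * t₁ :=
      mul_le_mul_of_nonneg_left h2 (by linarith)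
    show Φ (s₁ • v, s₂) + (1 - Φ (v, (0:ℝ))) * s₁
      ≤ Φ (t₁ • v, t₂) + (1 - Φ (v, (0:ℝ))) * t₁
    linarith
  · intro ξ
    have hφnn : 0 ≤ Φ (ξ.1, (0:ℝ)) := Phi_nonneg' hΦ _
    have heq1 : Φ (Φ (ξ.1, (0:ℝ)) • v, (0:ℝ)) = Φ (ξ.1, (0:ℝ)) := by
      rw [Phi_sv0' hΦ v (Φ (ξ.1, (0:ℝ))), abs_of_nonneg hφnn]
      exact (hrepv ξ.1).symm
    have h20 : Φ ((0:Rn n), |ξ.2|) = Φ ((0:Rn n), ξ.2) := Phi_abs2' hΦ ξ.2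
    have main : Φ ξ = Φ (Φ (ξ.1, (0:ℝ)) • v, |ξ.2|) := by
      apply le_antisymm
      · apply hPM ξ (Φ (ξ.1, (0:ℝ)) • v, |ξ.2|)
        · show Φ (ξ.1, 0) ≤ Φ (Φ (ξ.1, (0:ℝ)) • v, 0)
          rw [heq1]
        · show Φ ((0:Rn n), ξ.2) ≤ Φ ((0:Rn n), |ξ.2|)
          rw [h20]
      · apply hPM (Φ (ξ.1, (0:ℝ)) • v, |ξ.2|) ξ
        · show Φ (Φ (ξ.1, (0:ℝ)) • v, 0) ≤ Φ (ξ.1, 0)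
          rw [heq1]
        · show Φ ((0:Rn n), |ξ.2|) ≤ Φ ((0:Rn n), ξ.2)
          rw [h20]
    have hzero : (1 - Φ (v, (0:ℝ))) * Φ (ξ.1, (0:ℝ)) = 0 := by
      linear_combination hrepv ξ.1
    show Φ ξ = Φ (Φ (ξ.1, (0:ℝ)) • v, |ξ.2|) + (1 - Φ (v, (0:ℝ))) * Φ (ξ.1, (0:ℝ))
    linarith

end AuxPM

theorem partially_monotone_characterization {n : ℕ} (Φ : Rn1 n → ℝ)
    (hΦ : IsNorm1 Φ) :
    PartMono Φ ↔ ∃ ω : ℝ → ℝ → ℝ,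
      (∀ s t : ℝ, 0 ≤ s → 0 ≤ t → 0 ≤ ω s t) ∧
      (∀ l s t : ℝ, 0 < l → 0 ≤ s → 0 ≤ t → ω (l * s) (l * t) = l * ω s t) ∧
      ConvexOn ℝ {p : ℝ × ℝ | 0 ≤ p.1 ∧ 0 ≤ p.2} (fun p : ℝ × ℝ => ω p.1 p.2) ∧
      0 < ω 1 0 ∧ 0 < ω 0 1 ∧
      (∀ s₁ s₂ t₁ t₂ : ℝ, 0 ≤ s₁ → s₁ ≤ t₁ → 0 ≤ s₂ → s₂ ≤ t₂ → ω s₁ s₂ ≤ ω t₁ t₂) ∧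
      (∀ ξ : Rn1 n, Φ ξ = ω (Φ (ξ.1, (0:ℝ))) |ξ.2|) := by
  constructor
  · intro hPM
    by_cases hn : n = 0
    · subst hn
      have hsub : ∀ x : Rn 0, x = 0 := fun x => PiLp.ext fun i => i.elim0
      have h00 : Φ ((0:Rn 0), (0:ℝ)) = 0 := by
        have h := hΦ.2.1 0 ((0:Rn 0), (0:ℝ))
        rw [zero_smul, abs_zero, zero_mul] at h; exact h
      exact aux_omega hΦ hPM 0 (by rw [h00]; norm_num)
        (fun x => by rw [hsub x, h00, mul_zero])
    · have hn' : 0 < n := Nat.pos_of_ne_zero hn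
      set e : Rn n := EuclideanSpace.single ⟨0, hn'⟩ (1:ℝ) with he
      have hde : dotn e e = 1 := by
        simp [dotn, he, EuclideanSpace.single_apply]
      have hee : enorm1 (e, (0:ℝ)) = 1 := by
        simp [enorm1, dotp, hde]
      have hpos : 0 < Φ (e, (0:ℝ)) := by
        obtain ⟨-, -, c, hc, hlb⟩ := hΦ
        have h := hlb (e, (0:ℝ))
        rw [hee, mul_one] at h
        linarith
      have hv : Φ ((Φ (e, (0:ℝ)))⁻¹ • e, (0:ℝ)) = 1 := by
        rw [Phi_sv0' hΦ, abs_of_nonneg (inv_nonneg.mpr hpos.le),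
          inv_mul_cancel₀ hpos.ne']
      exact aux_omega hΦ hPM ((Φ (e, (0:ℝ)))⁻¹ • e) (le_of_eq hv)
        (fun x => by rw [hv, mul_one])
  · rintro ⟨ω, hnn, hhom, hconv, h10, h01, hmono, hrep⟩ ξ η hc1 hc2
    rw [hrep ξ, hrep η]
    have hb : 0 < Φ ((0:Rn n), (1:ℝ)) := Phi_01_pos' hΦ
    have h2 : |ξ.2| ≤ |η.2| := by
      rw [Phi_0t' hΦ ξ.2, Phi_0t' hΦ η.2] at hc2
      exact le_of_mul_le_mul_right hc2 hb
    exact hmono _ _ _ _ (Phi_nonneg' hΦ _) hc1 (abs_nonneg _) h2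
end
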